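/- arXiv:1711.08479 — 11 statements merged into one kernel-verified Lean document; each statement's English description precedes it below -/
import Mathlib

section
/- The power series z² − x⁴ − y⁴ is an irreducible element of the ring of formal power series ℂ⟦x, y, z⟧ in three variables over the complex numbers. -/
open MvPowerSeries Finsupp

private noncomputable def tri (i j k : ℕ) : Fin 3 →₀ ℕ := single 0 i + single 1 j + single 2 k

private lemma tri_app0 (i j k : ℕ) : tri i j k 0 = i := by
  simp [tri, Finsupp.single_apply]

private lemma tri_app1 (i j k : ℕ) : tri i j k 1 = j := by
  simp [tri, Finsupp.single_apply]

private lemma tri_app2 (i j k : ℕ) : tri i j k 2 = k := by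
  simp [tri, Finsupp.single_apply]

private lemma eq_tri (p : Fin 3 →₀ ℕ) : p = tri (p 0) (p 1) (p 2) := by
  ext i; fin_cases i <;> simp [tri, Finsupp.single_apply]

private lemma tri_eq_tri {i j k i' j' k' : ℕ} :
    tri i j k = tri i' j' k' ↔ i = i' ∧ j = j' ∧ k = k' := by
  constructor
  · intro h
    exact ⟨by rw [← tri_app0 i j k, h, tri_app0], by rw [← tri_app1 i j k, h, tri_app1],
      by rw [← tri_app2 i j k, h, tri_app2]⟩
  · rintro ⟨rfl, rfl, rfl⟩; rfl

private lemma single0_eq (n : ℕ) : (single 0 n : Fin 3 →₀ ℕ) = tri n 0 0 := by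
  simp [tri]

private lemma single1_eq (n : ℕ) : (single 1 n : Fin 3 →₀ ℕ) = tri 0 n 0 := by
  simp [tri]

private lemma single2_eq (n : ℕ) : (single 2 n : Fin 3 →₀ ℕ) = tri 0 0 n := by
  simp [tri]

private lemma tri_add (a b c d e f : ℕ) :
    tri a b c + tri d e f = tri (a + d) (b + e) (c + f) := by
  rw [eq_tri (tri a b c + tri d e f), tri_eq_tri]
  simp [tri_app0, tri_app1, tri_app2]

private lemma coeff_mul_tri (a b : MvPowerSeries (Fin 3) ℂ) (i j k : ℕ) :
    MvPowerSeries.coeff (tri i j k) (a * b) =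
      ∑ p ∈ (Finset.range (i+1)) ×ˢ (Finset.range (j+1)) ×ˢ (Finset.range (k+1)),
        MvPowerSeries.coeff (tri p.1 p.2.1 p.2.2) a *
          MvPowerSeries.coeff (tri (i - p.1) (j - p.2.1) (k - p.2.2)) b := by
  classical
  rw [MvPowerSeries.coeff_mul]
  refine Finset.sum_nbij' (i := fun p => ((p.1 0, p.1 1, p.1 2) : ℕ × ℕ × ℕ))
    (j := fun q => ((tri q.1 q.2.1 q.2.2, tri (i - q.1) (j - q.2.1) (k - q.2.2)) :
      (Fin 3 →₀ ℕ) × (Fin 3 →₀ ℕ))) ?_ ?_ ?_ ?_ ?_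
  · intro p hp
    rw [Finset.HasAntidiagonal.mem_antidiagonal] at hp
    have h0 := DFunLike.congr_fun hp (0 : Fin 3)
    have h1 := DFunLike.congr_fun hp (1 : Fin 3)
    have h2 := DFunLike.congr_fun hp (2 : Fin 3)
    simp only [Finsupp.coe_add, Pi.add_apply, tri_app0, tri_app1, tri_app2] at h0 h1 h2
    simp only [Finset.mem_product, Finset.mem_range, Nat.lt_succ_iff]
    omega
  · intro q hq
    simp only [Finset.mem_product, Finset.mem_range, Nat.lt_succ_iff] at hq
    rw [Finset.HasAntidiagonal.mem_antidiagonal, tri_add, tri_eq_tri]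
    omega
  · intro p hp
    rw [Finset.HasAntidiagonal.mem_antidiagonal] at hp
    have h0 := DFunLike.congr_fun hp (0 : Fin 3)
    have h1 := DFunLike.congr_fun hp (1 : Fin 3)
    have h2 := DFunLike.congr_fun hp (2 : Fin 3)
    simp only [Finsupp.coe_add, Pi.add_apply, tri_app0, tri_app1, tri_app2] at h0 h1 h2
    have e1 : tri (p.1 0) (p.1 1) (p.1 2) = p.1 := (eq_tri p.1).symm
    have e2 : tri (i - p.1 0) (j - p.1 1) (k - p.1 2) = p.2 := by
      rw [eq_tri p.2, tri_eq_tri]; omega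
    simp [e1, e2]
  · intro q hq
    simp only [Finset.mem_product, Finset.mem_range, Nat.lt_succ_iff] at hq
    simp [tri_app0, tri_app1, tri_app2]
  · intro p hp
    rw [Finset.HasAntidiagonal.mem_antidiagonal] at hp
    have h0 := DFunLike.congr_fun hp (0 : Fin 3)
    have h1 := DFunLike.congr_fun hp (1 : Fin 3)
    have h2 := DFunLike.congr_fun hp (2 : Fin 3)
    simp only [Finsupp.coe_add, Pi.add_apply, tri_app0, tri_app1, tri_app2] at h0 h1 h2
    have e1 : tri (p.1 0) (p.1 1) (p.1 2) = p.1 := (eq_tri p.1).symm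
    have e2 : tri (i - p.1 0) (j - p.1 1) (k - p.1 2) = p.2 := by
      rw [eq_tri p.2, tri_eq_tri]; omega
    rw [e1, e2]


open MvPowerSeries in
/-- The formal power series `z² − x⁴ − y⁴` is an irreducible element of `ℂ⟦x, y, z⟧`,
the ring of formal power series in three variables over `ℂ` (with `x = X 0`, `y = X 1`,
`z = X 2`). -/
theorem irreducible_z_sq_sub_x_pow4_sub_y_pow4 :
    Irreducible ((X 2 : MvPowerSeries (Fin 3) ℂ) ^ 2 - X 0 ^ 4 - X 1 ^ 4) := by
  classical
  constructor
  · rw [MvPowerSeries.isUnit_iff_constantCoeff]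
    simp [constantCoeff_X]
  · intro a b hab
    by_contra hcon
    push_neg at hcon
    obtain ⟨ha, hb⟩ := hcon
    rw [MvPowerSeries.isUnit_iff_constantCoeff, isUnit_iff_ne_zero, not_ne_iff] at ha hb
    have ha0 : MvPowerSeries.coeff (tri 0 0 0) a = 0 := by
      rw [show tri 0 0 0 = 0 from by simp [tri], MvPowerSeries.coeff_zero_eq_constantCoeff]
      exact ha
    have hb0 : MvPowerSeries.coeff (tri 0 0 0) b = 0 := by
      rw [show tri 0 0 0 = 0 from by simp [tri], MvPowerSeries.coeff_zero_eq_constantCoeff]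
      exact hb
    -- the coefficient equations
    have key : ∀ i j k : ℕ,
        MvPowerSeries.coeff (tri i j k) ((X 2 : MvPowerSeries (Fin 3) ℂ) ^ 2 - X 0 ^ 4 - X 1 ^ 4)
          = ∑ p ∈ (Finset.range (i+1)) ×ˢ (Finset.range (j+1)) ×ˢ (Finset.range (k+1)),
            MvPowerSeries.coeff (tri p.1 p.2.1 p.2.2) a *
              MvPowerSeries.coeff (tri (i - p.1) (j - p.2.1) (k - p.2.2)) b := by
      intro i j k
      rw [hab, coeff_mul_tri]
    have lhs : ∀ i j k : ℕ,
        MvPowerSeries.coeff (tri i j k) ((X 2 : MvPowerSeries (Fin 3) ℂ) ^ 2 - X 0 ^ 4 - X 1 ^ 4)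
          = (if tri i j k = tri 0 0 2 then 1 else 0) - (if tri i j k = tri 4 0 0 then 1 else 0)
            - (if tri i j k = tri 0 4 0 then 1 else 0) := by
      intro i j k
      rw [map_sub, map_sub, MvPowerSeries.coeff_X_pow, MvPowerSeries.coeff_X_pow,
        MvPowerSeries.coeff_X_pow, single2_eq, single0_eq, single1_eq]
    have eqn : ∀ i j k : ℕ,
        ((if tri i j k = tri 0 0 2 then (1:ℂ) else 0) - (if tri i j k = tri 4 0 0 then 1 else 0)
            - (if tri i j k = tri 0 4 0 then 1 else 0))
          = ∑ p ∈ (Finset.range (i+1)) ×ˢ (Finset.range (j+1)) ×ˢ (Finset.range (k+1)),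
            MvPowerSeries.coeff (tri p.1 p.2.1 p.2.2) a *
              MvPowerSeries.coeff (tri (i - p.1) (j - p.2.1) (k - p.2.2)) b := by
      intro i j k
      rw [← lhs, key]
    clear key lhs hab ha hb
    have h002 := eqn 0 0 2
    have h200 := eqn 2 0 0
    have h020 := eqn 0 2 0
    have h101 := eqn 1 0 1
    have h011 := eqn 0 1 1
    simp only [Finset.sum_product, Finset.sum_range_succ, Finset.sum_range_zero,
      tri_eq_tri, ha0, hb0, mul_zero, zero_mul, add_zero, zero_add, Nat.reduceSub,
      OfNat.ofNat_ne_zero, OfNat.ofNat_ne_one, Nat.reduceEqDiff, and_false, false_and,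
      and_true, true_and, if_true, if_false, reduceIte, sub_zero, zero_sub, and_self,
      one_ne_zero, zero_ne_one] at h002 h200 h020 h101 h011
    have hbz : MvPowerSeries.coeff (tri 0 0 1) b ≠ 0 := by
      intro h
      rw [h, mul_zero] at h002
      exact one_ne_zero h002
    have haz : MvPowerSeries.coeff (tri 0 0 1) a ≠ 0 := by
      intro h
      rw [h, zero_mul] at h002
      exact one_ne_zero h002
    have hA100 : MvPowerSeries.coeff (tri 1 0 0) a = 0 := by
      have h1 : (MvPowerSeries.coeff (tri 1 0 0) a)^2 * MvPowerSeries.coeff (tri 0 0 1) b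
          = 0 := by
        linear_combination -(MvPowerSeries.coeff (tri 1 0 0) a) * h101 +
          (MvPowerSeries.coeff (tri 0 0 1) a) * h200
      rcases mul_eq_zero.mp h1 with h | h
      · exact pow_eq_zero_iff two_ne_zero |>.mp h
      · exact absurd h hbz
    have hB100 : MvPowerSeries.coeff (tri 1 0 0) b = 0 := by
      have h1 : (MvPowerSeries.coeff (tri 0 0 1) a) *
          (MvPowerSeries.coeff (tri 1 0 0) b) = 0 := by
        linear_combination -h101 - (MvPowerSeries.coeff (tri 0 0 1) b) * hA100
      rcases mul_eq_zero.mp h1 with h | h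
      · exact absurd h haz
      · exact h
    have hA010 : MvPowerSeries.coeff (tri 0 1 0) a = 0 := by
      have h1 : (MvPowerSeries.coeff (tri 0 1 0) a)^2 * MvPowerSeries.coeff (tri 0 0 1) b
          = 0 := by
        linear_combination -(MvPowerSeries.coeff (tri 0 1 0) a) * h011 +
          (MvPowerSeries.coeff (tri 0 0 1) a) * h020
      rcases mul_eq_zero.mp h1 with h | h
      · exact pow_eq_zero_iff two_ne_zero |>.mp h
      · exact absurd h hbz
    have hB010 : MvPowerSeries.coeff (tri 0 1 0) b = 0 := by
      have h1 : (MvPowerSeries.coeff (tri 0 0 1) a) *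
          (MvPowerSeries.coeff (tri 0 1 0) b) = 0 := by
        linear_combination -h011 - (MvPowerSeries.coeff (tri 0 0 1) b) * hA010
      rcases mul_eq_zero.mp h1 with h | h
      · exact absurd h haz
      · exact h
    have h201 := eqn 2 0 1
    have h111 := eqn 1 1 1
    have h021 := eqn 0 2 1
    have h400 := eqn 4 0 0
    have h040 := eqn 0 4 0
    have h310 := eqn 3 1 0
    have h220 := eqn 2 2 0
    simp only [Finset.sum_product, Finset.sum_range_succ, Finset.sum_range_zero,
      tri_eq_tri, ha0, hb0, hA100, hB100, hA010, hB010, mul_zero, zero_mul, add_zero,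
      zero_add, Nat.reduceSub, OfNat.ofNat_ne_zero, OfNat.ofNat_ne_one, Nat.reduceEqDiff,
      and_false, false_and, and_true, true_and, if_true, if_false, reduceIte, sub_zero,
      zero_sub, and_self, one_ne_zero, zero_ne_one] at h201 h111 h021 h400 h040 h310 h220
    set α := MvPowerSeries.coeff (tri 0 0 1) a with hαdef
    set β := MvPowerSeries.coeff (tri 0 0 1) b with hβdef
    set A200 := MvPowerSeries.coeff (tri 2 0 0) a with hA200def
    set A110 := MvPowerSeries.coeff (tri 1 1 0) a with hA110def
    set A020 := MvPowerSeries.coeff (tri 0 2 0) a with hA020def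
    set B200 := MvPowerSeries.coeff (tri 2 0 0) b with hB200def
    set B110 := MvPowerSeries.coeff (tri 1 1 0) b with hB110def
    set B020 := MvPowerSeries.coeff (tri 0 2 0) b with hB020def
    have hB200 : B200 = -(A200 * β^2) := by
      linear_combination -β * h201 + B200 * h002
    have hB110 : B110 = -(A110 * β^2) := by
      linear_combination -β * h111 + B110 * h002
    have hB020 : B020 = -(A020 * β^2) := by
      linear_combination -β * h021 + B020 * h002
    have hA2 : A200^2 * β^2 = 1 := by
      linear_combination h400 + A200 * hB200
    have hA02 : A020^2 * β^2 = 1 := by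
      linear_combination h040 + A020 * hB020
    have h7 : A200 * A110 * β^2 = 0 := by
      linear_combination (1/2 : ℂ) * h310 + (A200/2) * hB110 + (A110/2) * hB200
    have hA110 : A110 = 0 := by
      linear_combination -A110 * hA2 + A200 * h7
    have h8 : A200 * A020 * β^2 = 0 := by
      linear_combination (1/2 : ℂ) * h220 + (A200/2) * hB020 + (A020/2) * hB200 +
        (B110/2) * hA110
    have : (1 : ℂ) = 0 := by
      linear_combination (-(A020^2*β^2)) * hA2 - hA02 + (A200*A020*β^2) * h8
    exact one_ne_zero this
end

section
/- Define φ₂ : ℝ³ → ℝ by φ₂(x,y,z) = x³ / (x² + x·y·z^{1/3} + y²·z^{2/3}) whenever x² + x·y·z^{1/3} + y²·z^{2/3} ≠ 0, and φ₂(x,y,z) = 0 otherwise. Then φ₂ is continuous on ℝ³. -/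
private lemma cube_strictMono : StrictMono (fun a : ℝ => a ^ 3) :=
  Odd.strictMono_pow (by decide : Odd 3)

private lemma g_bound (x u : ℝ) :
    |if x ^ 2 + x * u + u ^ 2 ≠ 0 then x ^ 3 / (x ^ 2 + x * u + u ^ 2) else 0| ≤ 2 * |x| := by
  by_cases h : x ^ 2 + x * u + u ^ 2 ≠ 0
  · rw [if_pos h]
    have hQpos : 0 < x ^ 2 + x * u + u ^ 2 := by
      rcases lt_or_eq_of_le (by nlinarith [sq_nonneg (x + u), sq_nonneg x, sq_nonneg u] :
        (0:ℝ) ≤ x ^ 2 + x * u + u ^ 2) with h' | h'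
      · exact h'
      · exact absurd h'.symm h
    rw [abs_div, abs_pow, div_le_iff₀ (by rwa [abs_of_pos hQpos]), abs_of_pos hQpos]
    nlinarith [abs_nonneg x, sq_abs x, sq_nonneg (x + u), sq_nonneg u]
  · rw [if_neg h, abs_zero]
    positivity

private lemma g_cont :
    Continuous (fun q : ℝ × ℝ =>
      if q.1 ^ 2 + q.1 * q.2 + q.2 ^ 2 ≠ 0 then
        q.1 ^ 3 / (q.1 ^ 2 + q.1 * q.2 + q.2 ^ 2) else 0) := by
  rw [continuous_iff_continuousAt]
  intro ⟨x₀, u₀⟩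
  by_cases h : x₀ ^ 2 + x₀ * u₀ + u₀ ^ 2 ≠ 0
  · have hev : ∀ᶠ q : ℝ × ℝ in nhds (x₀, u₀),
        q.1 ^ 3 / (q.1 ^ 2 + q.1 * q.2 + q.2 ^ 2) =
        (if q.1 ^ 2 + q.1 * q.2 + q.2 ^ 2 ≠ 0 then
          q.1 ^ 3 / (q.1 ^ 2 + q.1 * q.2 + q.2 ^ 2) else 0) := by
      have hc : Continuous (fun q : ℝ × ℝ => q.1 ^ 2 + q.1 * q.2 + q.2 ^ 2) := by continuity
      filter_upwards [hc.continuousAt (x := (x₀, u₀)) |>.eventually_ne h] with q hq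
      rw [if_pos hq]
    have hcont : ContinuousAt (fun q : ℝ × ℝ => q.1 ^ 3 / (q.1 ^ 2 + q.1 * q.2 + q.2 ^ 2))
        (x₀, u₀) := ContinuousAt.div (by fun_prop) (by fun_prop) h
    exact hcont.congr hev
  · push_neg at h
    have hx2 : x₀ ^ 2 = 0 :=
      le_antisymm (by nlinarith [sq_nonneg (x₀ + u₀), sq_nonneg u₀]) (sq_nonneg _)
    have hu2 : u₀ ^ 2 = 0 :=
      le_antisymm (by nlinarith [sq_nonneg (x₀ + u₀), sq_nonneg x₀]) (sq_nonneg _)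
    have hx : x₀ = 0 := by
      have := sq_eq_zero_iff.mp hx2; simpa using this
    have hu : u₀ = 0 := by
      have := sq_eq_zero_iff.mp hu2; simpa using this
    have hg0 : (if x₀ ^ 2 + x₀ * u₀ + u₀ ^ 2 ≠ 0 then
        x₀ ^ 3 / (x₀ ^ 2 + x₀ * u₀ + u₀ ^ 2) else 0) = 0 := by simp [hx, hu]
    rw [ContinuousAt, hg0]
    apply squeeze_zero_norm (fun q => g_bound q.1 q.2)
    have : Filter.Tendsto (fun q : ℝ × ℝ => 2 * |q.1|) (nhds (x₀, u₀)) (nhds (2 * |x₀|)) :=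
      Filter.Tendsto.const_mul _ (continuous_abs.comp continuous_fst).continuousAt
    simpa [hx] using this

/-- The function `φ₂(x,y,z) = x³ / (x² + x·y·z^{1/3} + y²·z^{2/3})` (extended by `0` where
the denominator vanishes) is continuous on `ℝ³`. Here `cbrt` is the real cube root, i.e.
the unique function with `(cbrt t)³ = t` for all `t`. -/
theorem continuous_phi2 (cbrt : ℝ → ℝ) (hcbrt : ∀ t, cbrt t ^ 3 = t)
    (φ₂ : ℝ × ℝ × ℝ → ℝ)
    (hφ₂ : ∀ p : ℝ × ℝ × ℝ,
      φ₂ p = if p.1 ^ 2 + p.1 * p.2.1 * cbrt p.2.2 + p.2.1 ^ 2 * (cbrt p.2.2) ^ 2 ≠ 0 then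
          p.1 ^ 3 / (p.1 ^ 2 + p.1 * p.2.1 * cbrt p.2.2 + p.2.1 ^ 2 * (cbrt p.2.2) ^ 2)
        else 0) :
    Continuous φ₂ := by
  have hmono : StrictMono cbrt := by
    intro a b hab
    by_contra hle
    push_neg at hle
    have := cube_strictMono.monotone hle
    simp only [hcbrt] at this
    linarith
  have hsurj : Function.Surjective cbrt := fun t =>
    ⟨t ^ 3, cube_strictMono.injective (by simpa using hcbrt (t ^ 3))⟩
  have hcbrt_cont : Continuous cbrt :=
    (StrictMono.orderIsoOfSurjective cbrt hmono hsurj).continuous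
  have hkey : φ₂ = (fun q : ℝ × ℝ =>
      if q.1 ^ 2 + q.1 * q.2 + q.2 ^ 2 ≠ 0 then
        q.1 ^ 3 / (q.1 ^ 2 + q.1 * q.2 + q.2 ^ 2) else 0) ∘
      (fun p : ℝ × ℝ × ℝ => (p.1, p.2.1 * cbrt p.2.2)) := by
    funext p
    rw [hφ₂ p]
    simp only [Function.comp_apply]
    ring_nf
  rw [hkey]
  exact g_cont.comp (by fun_prop)
end

section
/- Define φ₁ : ℝ³ → ℝ by φ₁(x,y,z) = z^{1/3}, and φ₂ : ℝ³ → ℝ by φ₂(x,y,z) = x³ / (x² + x·y·z^{1/3} + y²·z^{2/3}) whenever x² + x·y·z^{1/3} + y²·z^{2/3} ≠ 0 and φ₂(x,y,z) = 0 otherwise. Then φ₁ and φ₂ are continuous on ℝ³ and satisfy x³·y·φ₁(x,y,z) + (x³ − y³·z)·φ₂(x,y,z) = x⁴ for all (x,y,z) ∈ ℝ³. -/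
lemma aux_half_le (x u : ℝ) : (x ^ 2 + u ^ 2) / 2 ≤ x ^ 2 + x * u + u ^ 2 := by
  nlinarith [sq_nonneg (x + u)]

lemma aux_bound (x u : ℝ) : |x ^ 3 / (x ^ 2 + x * u + u ^ 2)| ≤ 2 * |x| := by
  set D := x ^ 2 + x * u + u ^ 2 with hD
  rcases eq_or_ne D 0 with h | h
  · rw [h, div_zero, abs_zero]
    positivity
  · have hDpos : 0 < D := lt_of_le_of_ne (by nlinarith [sq_nonneg (x + u), sq_nonneg u]) (Ne.symm h)
    rw [abs_div, abs_of_pos hDpos, div_le_iff₀ hDpos, abs_pow]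
    nlinarith [abs_nonneg x, sq_abs x, sq_nonneg (x + u), sq_nonneg u]

lemma aux_cont : Continuous (fun q : ℝ × ℝ => q.1 ^ 3 / (q.1 ^ 2 + q.1 * q.2 + q.2 ^ 2)) := by
  rw [continuous_iff_continuousAt]
  intro q
  by_cases hq : q = (0, 0)
  · subst hq
    have h0 : ((0:ℝ) ^ 3 / ((0:ℝ) ^ 2 + 0 * 0 + (0:ℝ) ^ 2)) = 0 := by norm_num
    unfold ContinuousAt
    rw [show ((fun q : ℝ × ℝ => q.1 ^ 3 / (q.1 ^ 2 + q.1 * q.2 + q.2 ^ 2)) ((0,0):ℝ×ℝ)) = 0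
      from by norm_num]
    apply squeeze_zero_norm (fun q : ℝ × ℝ => aux_bound q.1 q.2)
    have : Continuous (fun q : ℝ × ℝ => 2 * |q.1|) := by continuity
    have := this.tendsto ((0, 0) : ℝ × ℝ)
    simpa using this
  · have hne : q.1 ^ 2 + q.1 * q.2 + q.2 ^ 2 ≠ 0 := by
      intro h
      have h1 : (q.1 ^ 2 + q.2 ^ 2) / 2 ≤ 0 := h ▸ aux_half_le q.1 q.2
      have h2 : q.1 = 0 := by nlinarith [sq_nonneg q.1, sq_nonneg q.2]
      have h3 : q.2 = 0 := by nlinarith [sq_nonneg q.1, sq_nonneg q.2]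
      exact hq (Prod.ext h2 h3)
    exact ContinuousAt.div (by fun_prop) (by fun_prop) hne

/-- With `φ₁(x,y,z) = z^{1/3}` and `φ₂(x,y,z) = x³ / (x² + x·y·z^{1/3} + y²·z^{2/3})`
(extended by `0` where the denominator vanishes), both `φ₁` and `φ₂` are continuous on `ℝ³`
and satisfy `x³·y·φ₁ + (x³ − y³·z)·φ₂ = x⁴` everywhere. Here `cbrt` is the real cube root,
i.e. the unique function with `(cbrt t)³ = t` for all `t`. -/
theorem continuous_solution_of_equation (cbrt : ℝ → ℝ) (hcbrt : ∀ t, cbrt t ^ 3 = t)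
    (φ₁ φ₂ : ℝ × ℝ × ℝ → ℝ)
    (hφ₁ : ∀ p : ℝ × ℝ × ℝ, φ₁ p = cbrt p.2.2)
    (hφ₂ : ∀ p : ℝ × ℝ × ℝ,
      φ₂ p = if p.1 ^ 2 + p.1 * p.2.1 * cbrt p.2.2 + p.2.1 ^ 2 * (cbrt p.2.2) ^ 2 ≠ 0 then
          p.1 ^ 3 / (p.1 ^ 2 + p.1 * p.2.1 * cbrt p.2.2 + p.2.1 ^ 2 * (cbrt p.2.2) ^ 2)
        else 0) :
    Continuous φ₁ ∧ Continuous φ₂ ∧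
      ∀ x y z : ℝ,
        x ^ 3 * y * φ₁ (x, y, z) + (x ^ 3 - y ^ 3 * z) * φ₂ (x, y, z) = x ^ 4 := by
  -- cube root is continuous
  have hmono : StrictMono (fun x : ℝ => x ^ 3) := Odd.strictMono_pow (⟨1, by norm_num⟩)
  have hsurj : Function.Surjective (fun x : ℝ => x ^ 3) := fun t => ⟨cbrt t, hcbrt t⟩
  let e : ℝ ≃o ℝ := StrictMono.orderIsoOfSurjective _ hmono hsurj
  have hcbrt_eq : cbrt = ⇑e.symm := by
    funext t
    apply e.injective
    rw [e.apply_symm_apply]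
    exact hcbrt t
  have hcont_cbrt : Continuous cbrt := by
    rw [hcbrt_eq]; exact (e.symm : ℝ ≃o ℝ).continuous
  -- φ₂ is always x³/D
  have hφ₂' : ∀ p : ℝ × ℝ × ℝ,
      φ₂ p = p.1 ^ 3 / (p.1 ^ 2 + p.1 * p.2.1 * cbrt p.2.2 + p.2.1 ^ 2 * (cbrt p.2.2) ^ 2) := by
    intro p
    rw [hφ₂]
    split_ifs with h
    · rfl
    · rw [not_not] at h
      rw [h, div_zero]
  refine ⟨?_, ?_, ?_⟩
  · have : φ₁ = fun p : ℝ × ℝ × ℝ => cbrt p.2.2 := funext hφ₁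
    rw [this]
    exact hcont_cbrt.comp (continuous_snd.snd)
  · have : φ₂ = (fun q : ℝ × ℝ × ℝ => q.1 ^ 3 /
        (q.1 ^ 2 + q.1 * (q.2.1 * cbrt q.2.2) + (q.2.1 * cbrt q.2.2) ^ 2)) := by
      funext p
      rw [hφ₂']
      ring_nf
    rw [this]
    have : (fun q : ℝ × ℝ × ℝ => q.1 ^ 3 /
        (q.1 ^ 2 + q.1 * (q.2.1 * cbrt q.2.2) + (q.2.1 * cbrt q.2.2) ^ 2)) =
        (fun q : ℝ × ℝ => q.1 ^ 3 / (q.1 ^ 2 + q.1 * q.2 + q.2 ^ 2)) ∘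
        (fun p : ℝ × ℝ × ℝ => (p.1, p.2.1 * cbrt p.2.2)) := rfl
    rw [this]
    exact aux_cont.comp (continuous_fst.prodMk
      (continuous_snd.fst.mul (hcont_cbrt.comp continuous_snd.snd)))
  · intro x y z
    rw [hφ₁, hφ₂']
    simp only
    set c := cbrt z with hc
    have hz : c ^ 3 = z := hcbrt z
    set D := x ^ 2 + x * y * c + y ^ 2 * c ^ 2 with hD
    rcases eq_or_ne D 0 with h | h
    · have hx2 : x ^ 2 ≤ 0 := by nlinarith [sq_nonneg (x + y * c), sq_nonneg (y * c)]
      have hx : x = 0 := by nlinarith [sq_nonneg x]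
      subst hx
      simp
    · rw [← hz]
      field_simp
      ring
end

section
/- Let ψ₁, ψ₂ : ℝ³ → ℝ be continuous functions satisfying x³·y·ψ₁(x,y,z) + (x³ − y³·z)·ψ₂(x,y,z) = x⁴ for all (x,y,z) ∈ ℝ³. Then ψ₁(0,0,c) = c^{1/3} for every real number c. -/
lemma cube_inj : Function.Injective (fun a : ℝ => a ^ 3) :=
  (Odd.strictMono_pow (by decide)).injective

/-- If `ψ₁, ψ₂ : ℝ³ → ℝ` are continuous and satisfy
`x³·y·ψ₁(x,y,z) + (x³ − y³·z)·ψ₂(x,y,z) = x⁴` everywhere, then `ψ₁(0,0,c) = c^{1/3}` for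
every real `c`. Here `cbrt` is the real cube root, i.e. the unique function with
`(cbrt t)³ = t` for all `t`. -/
theorem continuous_solution_forces_cbrt (cbrt : ℝ → ℝ) (hcbrt : ∀ t, cbrt t ^ 3 = t)
    (ψ₁ ψ₂ : ℝ × ℝ × ℝ → ℝ) (hψ₁ : Continuous ψ₁) (hψ₂ : Continuous ψ₂)
    (heq : ∀ x y z : ℝ,
      x ^ 3 * y * ψ₁ (x, y, z) + (x ^ 3 - y ^ 3 * z) * ψ₂ (x, y, z) = x ^ 4) :
    ∀ c : ℝ, ψ₁ (0, 0, c) = cbrt c := by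
  have hcube : ∀ a : ℝ, cbrt (a ^ 3) = a := fun a => cube_inj (by simpa using hcbrt (a ^ 3))
  -- main case c ≠ 0
  have key : ∀ c : ℝ, c ≠ 0 → ψ₁ (0, 0, c) = cbrt c := by
    intro c hc
    set a := cbrt c with ha
    have ha3 : a ^ 3 = c := hcbrt c
    have ha0 : a ≠ 0 := by
      intro h; apply hc; rw [← ha3, h]; ring
    have hf : Continuous fun t : ℝ => ψ₁ (t * a, t, c) := by
      apply hψ₁.comp
      exact (continuous_id.mul continuous_const).prodMk
        (continuous_id.prodMk continuous_const)
    have hval : ∀ t : ℝ, t ≠ 0 → ψ₁ (t * a, t, c) = a := by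
      intro t ht
      have h := heq (t * a) t c
      have h2 : (t * a) ^ 3 - t ^ 3 * c = 0 := by rw [← ha3]; ring
      have hne : (t * a) ^ 3 * t ≠ 0 :=
        mul_ne_zero (pow_ne_zero _ (mul_ne_zero ht ha0)) ht
      have h6 : (t * a) ^ 3 * t * ψ₁ (t * a, t, c) = (t * a) ^ 3 * t * a := by
        linear_combination h - ψ₂ (t * a, t, c) * h2
      exact mul_left_cancel₀ hne h6
    -- limit argument
    have htend : Filter.Tendsto (fun t : ℝ => ψ₁ (t * a, t, c)) (nhdsWithin 0 {0}ᶜ)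
        (nhds (ψ₁ (0, 0, c))) := by
      have := (hf.tendsto 0).mono_left (nhdsWithin_le_nhds (s := {0}ᶜ))
      simpa using this
    have htend2 : Filter.Tendsto (fun t : ℝ => ψ₁ (t * a, t, c)) (nhdsWithin 0 {0}ᶜ)
        (nhds a) := by
      apply Filter.Tendsto.congr' _ tendsto_const_nhds
      filter_upwards [self_mem_nhdsWithin] with t ht
      exact (hval t ht).symm
    exact tendsto_nhds_unique htend htend2
  intro c
  rcases eq_or_ne c 0 with rfl | hc
  · -- c = 0 : use continuity in the last coordinate
    have hg : Continuous fun t : ℝ => ψ₁ (0, 0, t ^ 3) := by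
      apply hψ₁.comp
      exact continuous_const.prodMk (continuous_const.prodMk (continuous_pow 3))
    have hval : ∀ t : ℝ, t ≠ 0 → ψ₁ (0, 0, t ^ 3) = t := by
      intro t ht
      have : t ^ 3 ≠ 0 := pow_ne_zero _ ht
      rw [key _ this, hcube]
    have htend : Filter.Tendsto (fun t : ℝ => ψ₁ (0, 0, t ^ 3)) (nhdsWithin 0 {0}ᶜ)
        (nhds (ψ₁ (0, 0, 0))) := by
      have := (hg.tendsto 0).mono_left (nhdsWithin_le_nhds (s := {0}ᶜ))
      simpa using this
    have htend2 : Filter.Tendsto (fun t : ℝ => ψ₁ (0, 0, t ^ 3)) (nhdsWithin 0 {0}ᶜ)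
        (nhds 0) := by
      have : Filter.Tendsto (fun t : ℝ => t) (nhdsWithin 0 {0}ᶜ) (nhds 0) :=
        (continuous_id.tendsto 0).mono_left (nhdsWithin_le_nhds (s := {0}ᶜ))
      apply this.congr'
      filter_upwards [self_mem_nhdsWithin] with t ht
      exact (hval t ht).symm
    have h0 : ψ₁ (0, 0, 0) = 0 := tendsto_nhds_unique htend htend2
    have : cbrt 0 = 0 := by simpa using hcube 0
    rw [h0, this]
  · exact key c hc
end

section
/- There do not exist arc-analytic functions ψ₁, ψ₂ : ℝ³ → ℝ satisfying x³·y·ψ₁(x,y,z) + (x³ − y³·z)·ψ₂(x,y,z) = x⁴ for all (x,y,z) ∈ ℝ³. -/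
/-- A function is *arc-analytic* if it is real-analytic along every real-analytic arc
defined on `(-1, 1)`. -/
def ArcAnalytic {E : Type*} [NormedAddCommGroup E] [NormedSpace ℝ E] (f : E → ℝ) : Prop :=
  ∀ γ : ℝ → E, AnalyticOnNhd ℝ γ (Set.Ioo (-1) 1) →
    AnalyticOnNhd ℝ (f ∘ γ) (Set.Ioo (-1) 1)

/-- There do not exist arc-analytic functions `ψ₁, ψ₂ : ℝ³ → ℝ` satisfying
`x³·y·ψ₁(x,y,z) + (x³ − y³·z)·ψ₂(x,y,z) = x⁴` for all `(x,y,z) ∈ ℝ³`. -/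
theorem no_arcAnalytic_solution :
    ¬ ∃ ψ₁ ψ₂ : ℝ × ℝ × ℝ → ℝ, ArcAnalytic ψ₁ ∧ ArcAnalytic ψ₂ ∧
      ∀ x y z : ℝ,
        x ^ 3 * y * ψ₁ (x, y, z) + (x ^ 3 - y ^ 3 * z) * ψ₂ (x, y, z) = x ^ 4 := by
  rintro ⟨ψ₁, ψ₂, h1, _h2, heq⟩
  -- Step 1: ψ₁ (0, 0, u³) = u for every u ≠ 0.
  have keyA : ∀ u : ℝ, u ≠ 0 → ψ₁ (0, 0, u ^ 3) = u := by
    intro u hu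
    set γ : ℝ → ℝ × ℝ × ℝ := fun s => (s * u, s, u ^ 3) with hγdef
    have hγ : AnalyticOnNhd ℝ γ (Set.Ioo (-1) 1) := by
      intro s _
      exact (analyticAt_id.mul analyticAt_const).prod
        (analyticAt_id.prod analyticAt_const)
    have hψ := h1 γ hγ
    have hc : ContinuousAt (ψ₁ ∘ γ) 0 := (hψ 0 (by norm_num)).continuousAt
    have hval : ∀ s : ℝ, s ≠ 0 → (ψ₁ ∘ γ) s = u := by
      intro s hs
      have h := heq (s * u) s (u ^ 3)
      have h4 : s ^ 4 * u ^ 3 ≠ 0 := mul_ne_zero (pow_ne_zero _ hs) (pow_ne_zero _ hu)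
      have hmul : s ^ 4 * u ^ 3 * ψ₁ (s * u, s, u ^ 3) = s ^ 4 * u ^ 3 * u := by
        linear_combination h
      exact mul_left_cancel₀ h4 hmul
    have ht1 : Filter.Tendsto (ψ₁ ∘ γ) (nhdsWithin 0 {(0 : ℝ)}ᶜ) (nhds u) := by
      refine Filter.Tendsto.congr' ?_ tendsto_const_nhds
      filter_upwards [self_mem_nhdsWithin] with s hs
      exact (hval s hs).symm
    have ht2 : Filter.Tendsto (ψ₁ ∘ γ) (nhdsWithin 0 {(0 : ℝ)}ᶜ) (nhds ((ψ₁ ∘ γ) 0)) :=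
      hc.tendsto.mono_left nhdsWithin_le_nhds
    have := tendsto_nhds_unique ht2 ht1
    simpa [hγdef, Function.comp] using this
  -- Step 2: the function g t = ψ₁ (0,0,t) is analytic at 0.
  set g : ℝ → ℝ := fun t => ψ₁ (0, 0, t) with hgdef
  have hg : AnalyticOnNhd ℝ g (Set.Ioo (-1) 1) := by
    have := h1 (fun t : ℝ => ((0 : ℝ), (0 : ℝ), t))
      (fun t _ => analyticAt_const.prod (analyticAt_const.prod analyticAt_id))
    simpa [Function.comp_def, hgdef] using this
  have hga : AnalyticAt ℝ g 0 := hg 0 (by norm_num)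
  have hgd : HasDerivAt g (deriv g 0) 0 := hga.differentiableAt.hasDerivAt
  have hcube : HasDerivAt (fun u : ℝ => u ^ 3) ((3 : ℕ) * (0 : ℝ) ^ 2) 0 := by
    simpa using hasDerivAt_pow 3 (0 : ℝ)
  have hcomp : HasDerivAt (fun u : ℝ => g (u ^ 3)) (deriv g 0 * ((3 : ℕ) * (0 : ℝ) ^ 2)) 0 := by
    have h2 : HasDerivAt g (deriv g 0) ((fun u : ℝ => u ^ 3) 0) := by simpa using hgd
    simpa [Function.comp_def] using HasDerivAt.comp (h := fun u : ℝ => u ^ 3) (h₂ := g) 0 h2 hcube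
  -- the composite is the identity
  have h0 : g ((0 : ℝ) ^ 3) = 0 := by
    have hcont : ContinuousAt (fun u : ℝ => g (u ^ 3)) 0 := hcomp.continuousAt
    have ht1 : Filter.Tendsto (fun u : ℝ => g (u ^ 3)) (nhdsWithin 0 {(0 : ℝ)}ᶜ)
        (nhds 0) := by
      refine Filter.Tendsto.congr' ?_ (Filter.tendsto_id.mono_left nhdsWithin_le_nhds)
      filter_upwards [self_mem_nhdsWithin] with u hu
      exact (keyA u hu).symm
    have ht2 : Filter.Tendsto (fun u : ℝ => g (u ^ 3)) (nhdsWithin 0 {(0 : ℝ)}ᶜ)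
        (nhds (g ((0 : ℝ) ^ 3))) := hcont.tendsto.mono_left nhdsWithin_le_nhds
    exact tendsto_nhds_unique ht2 ht1
  have hid : (fun u : ℝ => g (u ^ 3)) = fun u : ℝ => u := by
    funext u
    by_cases hu : u = 0
    · simpa [hu] using h0
    · exact keyA u hu
  have hone : HasDerivAt (fun u : ℝ => g (u ^ 3)) 1 0 := by
    rw [hid]; exact hasDerivAt_id 0
  have := hone.unique hcomp
  norm_num at this
end

section
/- There do not exist Nash regulous functions ψ₁, ψ₂ : ℝ³ → ℝ satisfying x³·y·ψ₁(x,y,z) + (x³ − y³·z)·ψ₂(x,y,z) = x⁴ for all (x,y,z) ∈ ℝ³. -/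
/-- A set `S ⊆ ℝⁿ` is *semialgebraic* if it is a finite union of sets of the form
`{x : p x = 0, q₁ x > 0, …, q_r x > 0}` for real polynomials `p, q₁, …, q_r`. -/
def IsSemialgebraic {n : ℕ} (S : Set (Fin n → ℝ)) : Prop :=
  ∃ (k : ℕ) (p : Fin k → MvPolynomial (Fin n) ℝ) (r : Fin k → ℕ)
    (q : (i : Fin k) → Fin (r i) → MvPolynomial (Fin n) ℝ),
    S = ⋃ i, {x | MvPolynomial.eval x (p i) = 0 ∧
        ∀ j, 0 < MvPolynomial.eval x (q i j)}

/-- A *Nash function* on `ℝⁿ` is a real-analytic function `ℝⁿ → ℝ` whose graph is a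
semialgebraic subset of `ℝⁿ⁺¹`. -/
def IsNashFunction {n : ℕ} (f : (Fin n → ℝ) → ℝ) : Prop :=
  AnalyticOnNhd ℝ f Set.univ ∧
    IsSemialgebraic {v : Fin (n + 1) → ℝ | v (Fin.last n) = f (Fin.init v)}

/-- A continuous `f : ℝⁿ → ℝ` is *Nash regulous* if there are Nash functions `g, h` with
the zero set of `h` nowhere dense and `f = g / h` off the zero set of `h`. -/
def IsNashRegulous {n : ℕ} (f : (Fin n → ℝ) → ℝ) : Prop :=
  Continuous f ∧ ∃ g h : (Fin n → ℝ) → ℝ, IsNashFunction g ∧ IsNashFunction h ∧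
    IsNowhereDense {x | h x = 0} ∧ ∀ x, h x ≠ 0 → f x = g x / h x


open Filter Set Topology Nat

lemma cube_surj (z : ℝ) : ∃ s : ℝ, s ^ 3 = z := by
  rcases le_or_gt 0 z with h | h
  · exact ⟨z ^ ((3:ℝ)⁻¹), by rw [← Real.rpow_natCast (z ^ ((3:ℝ)⁻¹)) 3, ← Real.rpow_mul h]; norm_num⟩
  · refine ⟨-((-z) ^ ((3:ℝ)⁻¹)), ?_⟩
    have h' : (0:ℝ) ≤ -z := by linarith
    rw [Odd.neg_pow (by decide), ← Real.rpow_natCast ((-z) ^ ((3:ℝ)⁻¹)) 3, ← Real.rpow_mul h']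
    norm_num


lemma anal_iteratedDeriv {ξ : ℝ → ℝ} (hξ : AnalyticOnNhd ℝ ξ Set.univ) (n : ℕ) :
    AnalyticOnNhd ℝ (iteratedDeriv n ξ) Set.univ := by
  induction n with
  | zero => simpa using hξ
  | succ n ih => rw [iteratedDeriv_succ]; exact ih.deriv

lemma leib {g : ℝ → ℝ} (hg : AnalyticOnNhd ℝ g Set.univ) (n : ℕ) :
    iteratedDeriv (n + 1) (fun t => t * g t) =
      fun t => t * iteratedDeriv (n + 1) g t + (n + 1 : ℝ) * iteratedDeriv n g t := by
  have hda : ∀ m (t : ℝ), DifferentiableAt ℝ (iteratedDeriv m g) t :=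
    fun m t => ((anal_iteratedDeriv hg m) t trivial).differentiableAt
  induction n with
  | zero =>
    funext t
    rw [iteratedDeriv_one]
    rw [deriv_fun_mul differentiableAt_fun_id (by simpa using hda 0 t)]
    simp [iteratedDeriv_one, iteratedDeriv_zero]
    ring
  | succ n ih =>
    funext t
    rw [iteratedDeriv_succ, ih]
    rw [deriv_fun_add (f := fun y => y * iteratedDeriv (n+1) g y) (g := fun y => ((n:ℝ)+1) * iteratedDeriv n g y) ((differentiableAt_fun_id.mul (hda (n+1) t))) ((differentiableAt_const _).mul (hda n t))]
    rw [deriv_fun_mul differentiableAt_fun_id (hda (n+1) t), deriv_const_mul _ (hda n t)]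
    simp only [deriv_id'', one_mul, ← iteratedDeriv_succ]
    push_cast
    ring


lemma dslope_anal {ξ : ℝ → ℝ} (hξ : AnalyticOnNhd ℝ ξ Set.univ) :
    AnalyticOnNhd ℝ (dslope ξ 0) Set.univ := by
  intro t _
  rcases eq_or_ne t 0 with rfl | ht
  · obtain ⟨p, hp⟩ := hξ 0 trivial
    exact (hp.has_fpower_series_dslope_fslope).analyticAt
  · have h1 : AnalyticAt ℝ (fun s => (ξ s - ξ 0) / (s - 0)) t := by
      exact ((hξ t trivial).sub analyticAt_const).div
        (analyticAt_id.sub analyticAt_const) (by simpa using ht)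
    apply h1.congr
    have : ∀ᶠ s in 𝓝 t, s ≠ 0 := isOpen_ne.eventually_mem ht
    filter_upwards [this] with s hs
    rw [dslope_of_ne _ hs, slope_def_field]

lemma SL {ξ : ℝ → ℝ} (hξ : AnalyticOnNhd ℝ ξ Set.univ) (b : ℕ)
    (hlow : ∀ k < b, iteratedDeriv k ξ 0 = 0) :
    Tendsto (fun t => ξ t / t ^ b) (𝓝[≠] (0:ℝ)) (𝓝 (iteratedDeriv b ξ 0 / (b ! : ℝ))) := by
  induction b generalizing ξ with
  | zero =>
    simp only [pow_zero, div_one, Nat.factorial_zero, Nat.cast_one, iteratedDeriv_zero]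
    exact ((hξ 0 trivial).continuousAt.continuousWithinAt)
  | succ b ih =>
    have h0 : ξ 0 = 0 := hlow 0 (Nat.succ_pos b)
    set δ := dslope ξ 0 with hδ
    have hδa : AnalyticOnNhd ℝ δ Set.univ := dslope_anal hξ
    have hfun : ξ = fun t => t * δ t := by
      funext t
      rcases eq_or_ne t 0 with rfl | ht
      · simpa using h0
      · rw [hδ, dslope_of_ne _ ht, slope_def_field, h0]
        field_simp
        ring
    have hd : ∀ k, iteratedDeriv (k + 1) ξ 0 = (k + 1 : ℝ) * iteratedDeriv k δ 0 := by
      intro k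
      conv_lhs => rw [hfun]
      rw [leib hδa]
      norm_num
    have hlowδ : ∀ k < b, iteratedDeriv k δ 0 = 0 := by
      intro k hk
      have h2 := hlow (k + 1) (by omega)
      rw [hd k] at h2
      have : (k + 1 : ℝ) ≠ 0 := by positivity
      exact (mul_eq_zero.mp h2).resolve_left this
    have tendδ := ih hδa hlowδ
    have heq : ∀ᶠ t in 𝓝[≠] (0:ℝ), δ t / t ^ b = ξ t / t ^ (b + 1) := by
      filter_upwards [self_mem_nhdsWithin] with t ht
      have ht : t ≠ 0 := ht
      rw [hfun]
      field_simp
      ring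
    have hval : iteratedDeriv b δ 0 / (b ! : ℝ) =
        iteratedDeriv (b + 1) ξ 0 / ((b + 1)! : ℝ) := by
      rw [hd b, Nat.factorial_succ]
      have hb : (b ! : ℝ) ≠ 0 := by positivity
      push_cast
      field_simp
    rw [← hval]
    exact tendδ.congr' heq


lemma zero_of_derivs_zero {ξ : ℝ → ℝ} (hξ : AnalyticOnNhd ℝ ξ Set.univ)
    (hd : ∀ k, iteratedDeriv k ξ 0 = 0) (t : ℝ) : ξ t = 0 := by
  by_cases hev : ∀ᶠ s in 𝓝 (0:ℝ), ξ s = 0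
  · exact hξ.eqOn_zero_of_preconnected_of_eventuallyEq_zero isPreconnected_univ (mem_univ 0)
      hev (mem_univ t)
  · have hA := hξ 0 trivial
    have hne : analyticOrderAt ξ 0 ≠ ⊤ := fun h => hev (analyticOrderAt_eq_top.mp h)
    obtain ⟨n, hn⟩ := WithTop.ne_top_iff_exists.mp hne
    obtain ⟨u, hu, hu0, hequ⟩ := (hA.analyticOrderAt_eq_natCast (n := n)).mp hn.symm
    have t1 : Tendsto (fun s => ξ s / s ^ n) (𝓝[≠] (0:ℝ)) (𝓝 0) := by
      have := SL hξ n (fun k _ => hd k)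
      rwa [hd n, zero_div] at this
    have t2 : Tendsto (fun s => ξ s / s ^ n) (𝓝[≠] (0:ℝ)) (𝓝 (u 0)) := by
      have hcont : Tendsto u (𝓝[≠] (0:ℝ)) (𝓝 (u 0)) := hu.continuousAt.continuousWithinAt
      apply hcont.congr'
      filter_upwards [hequ.filter_mono nhdsWithin_le_nhds, self_mem_nhdsWithin] with s hs hs0
      rw [hs, sub_zero, smul_eq_mul]
      field_simp [pow_ne_zero _ (show s ≠ 0 from hs0)]
    exact (hu0 (tendsto_nhds_unique t2 t1)).elim

lemma aux_pow_cancel {i j : ℕ} (hij : i < j) {u v : ℝ → ℝ}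
    (hu : ContinuousAt u 0) (hv : ContinuousAt v 0)
    (h : ∀ᶠ z in 𝓝[≠] (0:ℝ), z ^ i * u z = z ^ j * v z) : u 0 = 0 := by
  have heq : ∀ᶠ z in 𝓝[≠] (0:ℝ), u z = z ^ (j - i) * v z := by
    filter_upwards [h, self_mem_nhdsWithin] with z hz hz0
    have hz0 : z ≠ 0 := hz0
    have hpow : z ^ j = z ^ i * z ^ (j - i) := by rw [← pow_add]; congr 1; omega
    apply mul_left_cancel₀ (pow_ne_zero i hz0)
    rw [hz, hpow]; ring
  have t1 : Tendsto u (𝓝[≠] (0:ℝ)) (𝓝 (u 0)) := hu.continuousWithinAt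
  have t2 : Tendsto (fun z => z ^ (j - i) * v z) (𝓝[≠] (0:ℝ)) (𝓝 0) := by
    have : Tendsto (fun z : ℝ => z ^ (j - i) * v z) (𝓝 (0:ℝ)) (𝓝 ((0:ℝ) ^ (j - i) * v 0)) :=
      (continuousAt_id.pow (j - i)).mul hv
    rw [zero_pow (by omega : j - i ≠ 0), zero_mul] at this
    exact this.mono_left nhdsWithin_le_nhds
  exact tendsto_nhds_unique (t1.congr' heq) t2

lemma one_var_contra {A B : ℝ → ℝ} (hA : AnalyticOnNhd ℝ A Set.univ)
    (hB : AnalyticOnNhd ℝ B Set.univ) {z₁ : ℝ} (hBz : B z₁ ≠ 0)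
    (hid : ∀ z, B z ≠ 0 → A z ^ 3 = z * B z ^ 3) : False := by
  have hB0 := hB 0 trivial
  have hA0 := hA 0 trivial
  have hBev : ¬ (∀ᶠ z in 𝓝 (0:ℝ), B z = 0) := fun hev =>
    hBz (hB.eqOn_zero_of_preconnected_of_eventuallyEq_zero isPreconnected_univ (mem_univ 0)
      hev (mem_univ z₁))
  have hneB : analyticOrderAt B 0 ≠ ⊤ := fun h => hBev (analyticOrderAt_eq_top.mp h)
  obtain ⟨n, hn⟩ := WithTop.ne_top_iff_exists.mp hneB
  obtain ⟨v, hv, hv0, heqv⟩ := (hB0.analyticOrderAt_eq_natCast (n := n)).mp hn.symm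
  have hVev : ∀ᶠ z in 𝓝[≠] (0:ℝ), B z ≠ 0 := by
    filter_upwards [heqv.filter_mono nhdsWithin_le_nhds,
      (hv.continuousAt.eventually_ne hv0).filter_mono nhdsWithin_le_nhds,
      self_mem_nhdsWithin] with z h1 h2 h3
    rw [h1, sub_zero, smul_eq_mul]
    exact mul_ne_zero (pow_ne_zero _ h3) h2
  have hAev : ¬ (∀ᶠ z in 𝓝 (0:ℝ), A z = 0) := by
    intro hev
    have : ∀ᶠ z in 𝓝[≠] (0:ℝ), False := by
      filter_upwards [hev.filter_mono nhdsWithin_le_nhds, hVev, self_mem_nhdsWithin]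
        with z h1 h2 h3
      have h4 := hid z h2
      rw [h1] at h4
      have : z * B z ^ 3 ≠ 0 := mul_ne_zero h3 (pow_ne_zero _ h2)
      have h5 : (0:ℝ) = z * B z ^ 3 := by simpa using h4
      exact this h5.symm
    obtain ⟨z, hz⟩ := this.exists
    exact hz
  have hneA : analyticOrderAt A 0 ≠ ⊤ := fun h => hAev (analyticOrderAt_eq_top.mp h)
  obtain ⟨m, hm⟩ := WithTop.ne_top_iff_exists.mp hneA
  obtain ⟨u, hu, hu0, hequ⟩ := (hA0.analyticOrderAt_eq_natCast (n := m)).mp hm.symm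
  have key : ∀ᶠ z in 𝓝[≠] (0:ℝ), z ^ (3 * m) * (u z) ^ 3 = z ^ (3 * n + 1) * (v z) ^ 3 := by
    filter_upwards [hVev, hequ.filter_mono nhdsWithin_le_nhds,
      heqv.filter_mono nhdsWithin_le_nhds] with z h1 h2 h3
    have h4 := hid z h1
    rw [h2, h3, sub_zero, smul_eq_mul, smul_eq_mul] at h4
    calc z ^ (3 * m) * (u z) ^ 3 = (z ^ m * u z) ^ 3 := by rw [mul_pow, ← pow_mul, mul_comm 3 m]
    _ = z * (z ^ n * v z) ^ 3 := h4
    _ = z ^ (3 * n + 1) * (v z) ^ 3 := by rw [mul_pow, ← pow_mul, mul_comm 3 n]; ring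
  rcases lt_or_gt_of_ne (show 3 * m ≠ 3 * n + 1 by omega) with h | h
  · have := aux_pow_cancel h (hu.continuousAt.pow 3) (hv.continuousAt.pow 3) key
    exact pow_ne_zero 3 hu0 this
  · have := aux_pow_cancel h (hv.continuousAt.pow 3) (hu.continuousAt.pow 3)
      (key.mono fun z hz => hz.symm)
    exact pow_ne_zero 3 hv0 this


noncomputable def Dt : ℕ → ((ℝ × ℝ) → ℝ) → ((ℝ × ℝ) → ℝ)
  | 0, Φ => Φ
  | (k+1), Φ => fun p => fderiv ℝ (Dt k Φ) p (1, 0)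

lemma Dt_anal {Φ : (ℝ × ℝ) → ℝ} (hΦ : AnalyticOnNhd ℝ Φ Set.univ) (k : ℕ) :
    AnalyticOnNhd ℝ (Dt k Φ) Set.univ := by
  induction k with
  | zero => exact hΦ
  | succ k ih =>
    show AnalyticOnNhd ℝ (fun p => fderiv ℝ (Dt k Φ) p (1, 0)) Set.univ
    have h1 : AnalyticOnNhd ℝ (fderiv ℝ (Dt k Φ)) Set.univ := ih.fderiv
    exact fun p hp =>
      ((ContinuousLinearMap.apply ℝ ℝ ((1:ℝ), (0:ℝ))).analyticAt _).comp (h1 p hp)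

lemma curve_anal (z : ℝ) : AnalyticOnNhd ℝ (fun t : ℝ => (t, z)) Set.univ :=
  fun t _ => analyticAt_id.prod analyticAt_const

lemma slice_anal {Φ : (ℝ × ℝ) → ℝ} (hΦ : AnalyticOnNhd ℝ Φ Set.univ) (z : ℝ) :
    AnalyticOnNhd ℝ (fun t => Φ (t, z)) Set.univ :=
  fun t _ => AnalyticAt.comp (f := fun s : ℝ => (s, z)) (hΦ (t, z) trivial) ((curve_anal z) t trivial)

lemma Dt_slice {Φ : (ℝ × ℝ) → ℝ} (hΦ : AnalyticOnNhd ℝ Φ Set.univ) (k : ℕ) (z : ℝ) :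
    iteratedDeriv k (fun t => Φ (t, z)) = fun t => Dt k Φ (t, z) := by
  induction k with
  | zero => rfl
  | succ k ih =>
    rw [iteratedDeriv_succ, ih]
    funext t
    have h1 : HasFDerivAt (Dt k Φ) (fderiv ℝ (Dt k Φ) (t, z)) (t, z) :=
      ((Dt_anal hΦ k) (t, z) trivial).differentiableAt.hasFDerivAt
    have h2 : HasDerivAt (fun s : ℝ => (s, z)) ((1:ℝ), (0:ℝ)) t :=
      (hasDerivAt_id t).prodMk (hasDerivAt_const t z)
    have h3 : HasDerivAt (fun s => Dt k Φ (s, z)) (fderiv ℝ (Dt k Φ) (t, z) (1, 0)) t :=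
      h1.comp_hasDerivAt t h2
    exact h3.deriv



lemma twoVar {F Φg Φh : (ℝ × ℝ) → ℝ} (hF : Continuous F)
    (hg : AnalyticOnNhd ℝ Φg Set.univ) (hh : AnalyticOnNhd ℝ Φh Set.univ)
    (heq : ∀ p, F p * Φh p = Φg p)
    (hax : ∀ s : ℝ, F (0, s ^ 3) = s)
    (hne : ∃ p, Φh p ≠ 0) : False := by
  -- there is some coefficient index with nonvanishing coefficient function
  have hex : ∃ k, ∃ z, Dt k Φh (0, z) ≠ 0 := by
    by_contra hcon
    push_neg at hcon
    obtain ⟨p, hp⟩ := hne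
    apply hp
    have hz : ∀ kk, iteratedDeriv kk (fun t => Φh (t, p.2)) 0 = 0 := by
      intro kk
      rw [Dt_slice hh kk p.2]
      exact hcon kk p.2
    have := zero_of_derivs_zero (slice_anal hh p.2) hz p.1
    simpa using this
  classical
  let b := Nat.find hex
  obtain ⟨z₁, hz₁⟩ : ∃ z, Dt b Φh (0, z) ≠ 0 := Nat.find_spec hex
  have hlow : ∀ k < b, ∀ z, Dt k Φh (0, z) = 0 := by
    intro k hk z
    have := Nat.find_min hex hk
    push_neg at this
    exact this z
  set B : ℝ → ℝ := fun z => Dt b Φh (0, z) with hBdef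
  set A : ℝ → ℝ := fun z => Dt b Φg (0, z) with hAdef
  have hBa : AnalyticOnNhd ℝ B Set.univ := fun z _ =>
    AnalyticAt.comp (f := fun z : ℝ => ((0:ℝ), z)) ((Dt_anal hh b) (0, z) trivial)
      (analyticAt_const.prod analyticAt_id)
  have hAa : AnalyticOnNhd ℝ A Set.univ := fun z _ =>
    AnalyticAt.comp (f := fun z : ℝ => ((0:ℝ), z)) ((Dt_anal hg b) (0, z) trivial)
      (analyticAt_const.prod analyticAt_id)
  -- key identity on {B ≠ 0}
  have key : ∀ z, B z ≠ 0 → A z = F (0, z) * B z := by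
    intro z hz
    set ξ : ℝ → ℝ := fun t => Φh (t, z) with hξdef
    set γ : ℝ → ℝ := fun t => Φg (t, z) with hγdef
    have hξa : AnalyticOnNhd ℝ ξ Set.univ := slice_anal hh z
    have hγa : AnalyticOnNhd ℝ γ Set.univ := slice_anal hg z
    have hlowξ : ∀ k < b, iteratedDeriv k ξ 0 = 0 := by
      intro k hk
      rw [hξdef, Dt_slice hh k z]
      exact hlow k hk z
    have tH : Tendsto (fun t => ξ t / t ^ b) (𝓝[≠] (0:ℝ)) (𝓝 (B z / (b ! : ℝ))) := by
      have := SL hξa b hlowξ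
      rwa [Dt_slice hh b z] at this
    have tF : Tendsto (fun t => F (t, z)) (𝓝[≠] (0:ℝ)) (𝓝 (F (0, z))) :=
      ((hF.comp (continuous_id.prodMk continuous_const)).tendsto 0).mono_left
        nhdsWithin_le_nhds
    have tG : Tendsto (fun t => γ t / t ^ b) (𝓝[≠] (0:ℝ)) (𝓝 (F (0, z) * (B z / (b ! : ℝ)))) := by
      have h1 := tF.mul tH
      apply h1.congr
      intro t
      show F (t, z) * (ξ t / t ^ b) = γ t / t ^ b
      have h2 : γ t = F (t, z) * ξ t := (heq (t, z)).symm
      rw [h2]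
      ring
    have γlow : ∀ k, k < b → iteratedDeriv k γ 0 = 0 := by
      intro k
      induction k using Nat.strong_induction_on with
      | _ k ih =>
        intro hkb
        have hlk : ∀ j < k, iteratedDeriv j γ 0 = 0 := fun j hj => ih j hj (by omega)
        have t1 := SL hγa k hlk
        have t2 : Tendsto (fun t => γ t / t ^ k) (𝓝[≠] (0:ℝ)) (𝓝 0) := by
          have hpow : Tendsto (fun t : ℝ => t ^ (b - k)) (𝓝[≠] (0:ℝ)) (𝓝 0) := by
            have : Tendsto (fun t : ℝ => t ^ (b - k)) (𝓝 (0:ℝ)) (𝓝 ((0:ℝ) ^ (b - k))) :=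
              continuousAt_id.pow (b - k)
            rw [zero_pow (by omega : b - k ≠ 0)] at this
            exact this.mono_left nhdsWithin_le_nhds
          have h2 := tG.mul hpow
          rw [mul_zero] at h2
          apply h2.congr'
          filter_upwards [self_mem_nhdsWithin] with t ht
          have ht : t ≠ 0 := ht
          have : t ^ b = t ^ k * t ^ (b - k) := by rw [← pow_add]; congr 1; omega
          field_simp [this]
          rw [this]; ring
        have h3 := tendsto_nhds_unique t1 t2
        have hf : (k ! : ℝ) ≠ 0 := by positivity
        field_simp at h3
        simpa using h3
    have tfin := SL hγa b γlow
    rw [Dt_slice hg b z] at tfin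
    have h4 := tendsto_nhds_unique tfin tG
    have hf : (b ! : ℝ) ≠ 0 := by positivity
    rw [div_eq_iff hf] at h4
    rw [hAdef]
    field_simp at h4 ⊢
    linarith [h4]
  -- cube identity
  have hid : ∀ z, B z ≠ 0 → A z ^ 3 = z * B z ^ 3 := by
    intro z hz
    obtain ⟨s, hs⟩ := cube_surj z
    have hF3 : F (0, z) ^ 3 = z := by rw [← hs, hax s]
    rw [key z hz, mul_pow, hF3]
  exact one_var_contra hAa hBa hz₁ hid

/-- There do not exist Nash regulous functions `ψ₁, ψ₂ : ℝ³ → ℝ` satisfying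
`x³·y·ψ₁(x,y,z) + (x³ − y³·z)·ψ₂(x,y,z) = x⁴` for all `(x,y,z) ∈ ℝ³`. -/
theorem no_nashRegulous_solution :
    ¬ ∃ ψ₁ ψ₂ : (Fin 3 → ℝ) → ℝ, IsNashRegulous ψ₁ ∧ IsNashRegulous ψ₂ ∧
      ∀ x y z : ℝ,
        x ^ 3 * y * ψ₁ ![x, y, z] + (x ^ 3 - y ^ 3 * z) * ψ₂ ![x, y, z] = x ^ 4 := by
  rintro ⟨ψ₁, ψ₂, ⟨hc, g, h, hgN, hhN, hZ, hdiv⟩, -, Heq⟩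
  have hga : AnalyticOnNhd ℝ g Set.univ := hgN.1
  have hha : AnalyticOnNhd ℝ h Set.univ := hhN.1
  have hgc : Continuous g :=
    continuous_iff_continuousAt.mpr fun x => (hga x trivial).continuousAt
  have hhc : Continuous h :=
    continuous_iff_continuousAt.mpr fun x => (hha x trivial).continuousAt
  -- ψ₁ * h = g everywhere
  have hfh : ∀ x, ψ₁ x * h x = g x := by
    have hcl : IsClosed {x : Fin 3 → ℝ | h x = 0} := isClosed_eq hhc continuous_const
    have hint : interior {x : Fin 3 → ℝ | h x = 0} = ∅ := hcl.isNowhereDense_iff.mp hZ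
    have hd : Dense {x : Fin 3 → ℝ | h x = 0}ᶜ := interior_eq_empty_iff_dense_compl.mp hint
    have heqon : Set.EqOn (fun x => ψ₁ x * h x) g {x : Fin 3 → ℝ | h x = 0}ᶜ := by
      intro x hx
      have hx' : h x ≠ 0 := hx
      have := hdiv x hx'
      show ψ₁ x * h x = g x
      rw [this, div_mul_cancel₀ _ hx']
    have := Continuous.ext_on hd (hc.mul hhc) hgc heqon
    exact fun x => congrFun this x
  -- values of ψ₁ on the surface
  have step1 : ∀ s y : ℝ, y ≠ 0 → s ≠ 0 → ψ₁ ![s * y, y, s ^ 3] = s := by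
    intro s y hy hs
    have H := Heq (s * y) y (s ^ 3)
    have h1 : ((s * y) ^ 3 - y ^ 3 * s ^ 3) = 0 := by ring
    rw [h1, zero_mul, add_zero] at H
    have h2 : (s * y) ^ 3 * y ≠ 0 :=
      mul_ne_zero (pow_ne_zero _ (mul_ne_zero hs hy)) hy
    exact mul_left_cancel₀ h2 (H.trans (by ring))
  -- values of ψ₁ on the z-axis
  have haxis : ∀ s : ℝ, ψ₁ ![0, 0, s ^ 3] = s := by
    have step2 : ∀ s : ℝ, s ≠ 0 → ψ₁ ![0, 0, s ^ 3] = s := by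
      intro s hs
      have hcurve : Continuous (fun y : ℝ => (![s * y, y, s ^ 3] : Fin 3 → ℝ)) := by
        apply continuous_pi
        intro i
        fin_cases i <;> simp <;> fun_prop
      have hval : (![s * 0, 0, s ^ 3] : Fin 3 → ℝ) = ![0, 0, s ^ 3] := by norm_num
      have t0 : Tendsto (fun y : ℝ => (![s * y, y, s ^ 3] : Fin 3 → ℝ)) (𝓝[≠] (0:ℝ))
          (𝓝 ![0, 0, s ^ 3]) := by
        have := (hcurve.tendsto 0).mono_left (nhdsWithin_le_nhds (s := {(0:ℝ)}ᶜ))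
        rwa [hval] at this
      have t1 : Tendsto (fun y : ℝ => ψ₁ ![s * y, y, s ^ 3]) (𝓝[≠] (0:ℝ))
          (𝓝 (ψ₁ ![0, 0, s ^ 3])) := (hc.tendsto _).comp t0
      have t2 : Tendsto (fun y : ℝ => ψ₁ ![s * y, y, s ^ 3]) (𝓝[≠] (0:ℝ)) (𝓝 s) := by
        apply Tendsto.congr' _ tendsto_const_nhds
        filter_upwards [self_mem_nhdsWithin] with y hy
        exact (step1 s y hy hs).symm
      exact tendsto_nhds_unique t1 t2
    intro s
    rcases eq_or_ne s 0 with rfl | hs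
    · have hcurve : Continuous (fun s : ℝ => (![(0:ℝ), 0, s ^ 3] : Fin 3 → ℝ)) := by
        apply continuous_pi
        intro i
        fin_cases i <;> simp <;> fun_prop
      have hval : (![(0:ℝ), 0, (0:ℝ) ^ 3] : Fin 3 → ℝ) = ![0, 0, 0] := by norm_num
      have t1 : Tendsto (fun s : ℝ => ψ₁ ![0, 0, s ^ 3]) (𝓝[≠] (0:ℝ))
          (𝓝 (ψ₁ ![0, 0, 0])) := by
        have := ((hc.tendsto _).comp ((hcurve.tendsto 0).mono_left
          (nhdsWithin_le_nhds (s := {(0:ℝ)}ᶜ))))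
        rwa [hval] at this
      have t2 : Tendsto (fun s : ℝ => ψ₁ ![0, 0, s ^ 3]) (𝓝[≠] (0:ℝ)) (𝓝 0) := by
        apply Tendsto.congr' _ (tendsto_id.mono_left nhdsWithin_le_nhds)
        filter_upwards [self_mem_nhdsWithin] with y hy
        exact (step2 y hy).symm
      have := tendsto_nhds_unique t1 t2
      norm_num
      convert this using 2 <;> norm_num
    · exact step2 s hs
  -- a point where h is nonzero
  have hpt : ∃ x : Fin 3 → ℝ, h x ≠ 0 := by
    by_contra hcon
    push_neg at hcon
    have huniv : {x : Fin 3 → ℝ | h x = 0} = Set.univ := eq_univ_of_forall hcon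
    rw [IsNowhereDense, huniv, closure_univ, interior_univ] at hZ
    exact (univ_nonempty).ne_empty hZ
  obtain ⟨x₀, hx₀⟩ := hpt
  -- the plane through the z-axis and x₀
  set a : ℝ := x₀ 0 with ha
  set b : ℝ := x₀ 1 with hb
  set L : ℝ × ℝ → (Fin 3 → ℝ) := fun p => ![p.1 * a, p.1 * b, p.2] with hL
  have hLa : AnalyticOnNhd ℝ L Set.univ := by
    have : AnalyticOnNhd ℝ (fun p : ℝ × ℝ => fun i : Fin 3 =>
        (![p.1 * a, p.1 * b, p.2] : Fin 3 → ℝ) i) Set.univ := by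
      apply AnalyticOnNhd.pi
      intro i
      have h1 : AnalyticOnNhd ℝ (fun q : ℝ × ℝ => q.1 * a) Set.univ :=
        fun p _ => analyticAt_fst.mul analyticAt_const
      have h2 : AnalyticOnNhd ℝ (fun q : ℝ × ℝ => q.1 * b) Set.univ :=
        fun p _ => analyticAt_fst.mul analyticAt_const
      have h3 : AnalyticOnNhd ℝ (fun q : ℝ × ℝ => q.2) Set.univ :=
        fun p _ => analyticAt_snd
      fin_cases i
      · simpa using h1
      · simpa using h2
      · simpa using h3
    exact this
  have hLc : Continuous L := by
    apply continuous_pi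
    intro i
    fin_cases i <;> simp [hL] <;> fun_prop
  apply twoVar (F := fun p => ψ₁ (L p)) (Φg := fun p => g (L p)) (Φh := fun p => h (L p))
  · exact hc.comp hLc
  · exact fun p hp => AnalyticAt.comp (hga (L p) trivial) (hLa p hp)
  · exact fun p hp => AnalyticAt.comp (hha (L p) trivial) (hLa p hp)
  · exact fun p => hfh (L p)
  · intro s
    have : L (0, s ^ 3) = ![0, 0, s ^ 3] := by
      simp [hL]
    rw [this, haxis s]
  · refine ⟨(1, x₀ 2), ?_⟩
    have : L (1, x₀ 2) = x₀ := by
      funext i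
      fin_cases i <;> simp [hL, ha, hb]
    rw [this]
    exact hx₀
end

section
/- The function f : ℝ² → ℝ given by f(z,w) = √(z⁴ + w⁴) is arc-analytic: for every function γ : ℝ → ℝ² that is real-analytic on the interval (−1,1), the composite t ↦ √(γ₁(t)⁴ + γ₂(t)⁴) is real-analytic on (−1,1). -/
open Filter Topology

/-- `Real.sqrt` composed with an analytic function nonvanishing at a point is analytic there. -/
lemma AnalyticAt.sqrt' {g : ℝ → ℝ} {t₀ : ℝ} (hg : AnalyticAt ℝ g t₀) (h : g t₀ ≠ 0) :
    AnalyticAt ℝ (fun t => Real.sqrt (g t)) t₀ :=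
  ((Real.contDiffAt_sqrt (n := (⊤ : WithTop ℕ∞)) h).analyticAt).comp hg

/-- Auxiliary: the case where both components factor with orders `n₁ ≤ n₂`. -/
lemma aux_sqrt_pow {u₁ u₂ : ℝ → ℝ} {t₀ : ℝ} {n₁ n₂ : ℕ} (hn : n₁ ≤ n₂)
    (hu₁ : AnalyticAt ℝ u₁ t₀) (hu₂ : AnalyticAt ℝ u₂ t₀) (h : u₁ t₀ ≠ 0) :
    AnalyticAt ℝ
      (fun t => Real.sqrt (((t - t₀) ^ n₁ * u₁ t) ^ 4 + ((t - t₀) ^ n₂ * u₂ t) ^ 4)) t₀ := by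
  obtain ⟨k, rfl⟩ : ∃ k, n₂ = n₁ + k := ⟨n₂ - n₁, by omega⟩
  set v : ℝ → ℝ := fun t => u₁ t ^ 4 + (t - t₀) ^ (4 * k) * u₂ t ^ 4 with hv
  have hvt₀ : 0 < v t₀ := by
    have h1 : 0 < u₁ t₀ ^ 4 := by positivity
    have h2 : 0 ≤ (t₀ - t₀) ^ (4 * k) * u₂ t₀ ^ 4 := by
      have : 0 ≤ (t₀ - t₀) ^ (4 * k) := by
        rw [show 4 * k = 2 * k * 2 by ring, pow_mul]; exact sq_nonneg _
      positivity
    simp only [hv]; linarith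
  have hvan : AnalyticAt ℝ v t₀ := by
    apply (hu₁.pow 4).add
    exact ((((analyticAt_id (𝕜 := ℝ)).sub analyticAt_const).pow (4 * k)).mul (hu₂.pow 4))
  have key : ∀ t : ℝ, Real.sqrt (((t - t₀) ^ n₁ * u₁ t) ^ 4 + ((t - t₀) ^ (n₁ + k) * u₂ t) ^ 4)
      = (t - t₀) ^ (2 * n₁) * Real.sqrt (v t) := by
    intro t
    have harg : ((t - t₀) ^ n₁ * u₁ t) ^ 4 + ((t - t₀) ^ (n₁ + k) * u₂ t) ^ 4
        = (t - t₀) ^ (4 * n₁) * v t := by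
      simp only [hv]; ring
    have hnn : 0 ≤ (t - t₀) ^ (2 * n₁) := by rw [pow_mul]; positivity
    rw [harg, show (4 : ℕ) * n₁ = 2 * n₁ * 2 by ring, pow_mul,
      Real.sqrt_mul (sq_nonneg _), Real.sqrt_sq hnn]
  have : AnalyticAt ℝ (fun t : ℝ => (t - t₀) ^ (2 * n₁) * Real.sqrt (v t)) t₀ :=
    (((analyticAt_id (𝕜 := ℝ)).sub analyticAt_const).pow (2 * n₁)).mul
      (hvan.sqrt' hvt₀.ne')
  exact this.congr (Filter.Eventually.of_forall fun t => (key t).symm)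

/-- The key pointwise lemma: `√(g₁⁴ + g₂⁴)` is analytic at any point where `g₁, g₂` are. -/
lemma key_lemma {g₁ g₂ : ℝ → ℝ} {t₀ : ℝ} (h₁ : AnalyticAt ℝ g₁ t₀) (h₂ : AnalyticAt ℝ g₂ t₀) :
    AnalyticAt ℝ (fun t => Real.sqrt (g₁ t ^ 4 + g₂ t ^ 4)) t₀ := by
  by_cases hz₁ : ∀ᶠ t in 𝓝 t₀, g₁ t = 0
  · -- `g₁ ≡ 0` near `t₀`: the function is `g₂ ^ 2` near `t₀`
    apply (h₂.pow 2).congr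
    filter_upwards [hz₁] with t ht
    rw [ht]
    rw [show (0:ℝ) ^ 4 + g₂ t ^ 4 = (g₂ t ^ 2) ^ 2 by ring, Real.sqrt_sq (sq_nonneg _), Pi.pow_apply]
  by_cases hz₂ : ∀ᶠ t in 𝓝 t₀, g₂ t = 0
  · apply (h₁.pow 2).congr
    filter_upwards [hz₂] with t ht
    rw [ht]
    rw [show g₁ t ^ 4 + (0:ℝ) ^ 4 = (g₁ t ^ 2) ^ 2 by ring, Real.sqrt_sq (sq_nonneg _), Pi.pow_apply]
  obtain ⟨n₁, u₁, hu₁, hu₁0, heq₁⟩ := h₁.exists_eventuallyEq_pow_smul_nonzero_iff.mpr hz₁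
  obtain ⟨n₂, u₂, hu₂, hu₂0, heq₂⟩ := h₂.exists_eventuallyEq_pow_smul_nonzero_iff.mpr hz₂
  simp only [smul_eq_mul] at heq₁ heq₂
  rcases le_total n₁ n₂ with hn | hn
  · have := aux_sqrt_pow hn hu₁ hu₂ hu₁0
    apply this.congr
    filter_upwards [heq₁, heq₂] with t ht1 ht2
    rw [ht1, ht2]
  · have := aux_sqrt_pow hn hu₂ hu₁ hu₂0
    apply AnalyticAt.congr (f := fun t =>
      Real.sqrt (((t - t₀) ^ n₂ * u₂ t) ^ 4 + ((t - t₀) ^ n₁ * u₁ t) ^ 4)) this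
    filter_upwards [heq₁, heq₂] with t ht1 ht2
    rw [ht1, ht2, add_comm]

/-- The function `f : ℝ² → ℝ`, `f(z, w) = √(z⁴ + w⁴)`, is arc-analytic. -/
theorem arcAnalytic_sqrt_z4_add_w4 :
    ArcAnalytic (fun p : ℝ × ℝ => Real.sqrt (p.1 ^ 4 + p.2 ^ 4)) := by
  intro γ hγ t₀ ht₀
  have hγt := hγ t₀ ht₀
  have h₁ : AnalyticAt ℝ (fun t => (γ t).1) t₀ :=
    ((ContinuousLinearMap.fst ℝ ℝ ℝ).analyticAt _).comp hγt
  have h₂ : AnalyticAt ℝ (fun t => (γ t).2) t₀ :=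
    ((ContinuousLinearMap.snd ℝ ℝ ℝ).analyticAt _).comp hγt
  exact key_lemma h₁ h₂
end

section
/- Define φ₂ : ℝ⁴ → ℝ by φ₂(x,y,z,w) = x⁴ / (x² + y²·√(z⁴ + w⁴)) whenever x² + y²·√(z⁴ + w⁴) ≠ 0, and φ₂(x,y,z,w) = 0 otherwise. Then φ₂ is arc-analytic: for every function γ : ℝ → ℝ⁴ that is real-analytic on the interval (−1,1), the composite φ₂ ∘ γ is real-analytic on (−1,1). -/
open scoped Topology


lemma analyticAt_sqrt {c : ℝ} (hc : 0 < c) : AnalyticAt ℝ Real.sqrt c := by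
  have h1 : AnalyticAt ℝ (fun x : ℝ => ((Complex.exp (Complex.log x / 2)).re)) c := by
    have hlog : AnalyticAt ℂ (fun z : ℂ => Complex.exp (Complex.log z / 2)) (c : ℂ) :=
      ((analyticAt_clog (by simp [Complex.mem_slitPlane_iff, hc])).div
        analyticAt_const (by norm_num)).cexp
    have hcomp : AnalyticAt ℝ (fun x : ℝ => Complex.exp (Complex.log x / 2)) c :=
      hlog.restrictScalars.comp (Complex.ofRealCLM.analyticAt c)
    exact (Complex.reCLM.analyticAt _).comp hcomp
  apply h1.congr
  have hev : ∀ᶠ x : ℝ in 𝓝 c, 0 < x := Filter.Tendsto.eventually_const_lt hc fun _ h => h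
  filter_upwards [hev] with x hx
  have h2 : (Complex.log x / 2 : ℂ) = ((Real.log x / 2 : ℝ) : ℂ) := by
    rw [← Complex.ofReal_log hx.le]; push_cast; ring
  rw [h2, ← Complex.ofReal_exp, Complex.ofReal_re, Real.sqrt_eq_rpow, Real.rpow_def_of_pos hx]
  ring_nf

/-- Factorization of a real-analytic function at a point. -/
lemma factor_aux {f : ℝ → ℝ} {t₀ : ℝ} (hf : AnalyticAt ℝ f t₀) :
    (∀ᶠ t in 𝓝 t₀, f t = 0) ∨
      ∃ (n : ℕ) (g : ℝ → ℝ), AnalyticAt ℝ g t₀ ∧ g t₀ ≠ 0 ∧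
        ∀ᶠ t in 𝓝 t₀, f t = (t - t₀) ^ n * g t := by
  cases h : analyticOrderAt f t₀ with
  | top => exact Or.inl (analyticOrderAt_eq_top.mp h)
  | coe n =>
    obtain ⟨g, hg, hg0, heq⟩ := hf.analyticOrderAt_eq_natCast.mp h
    exact Or.inr ⟨n, g, hg, hg0, by simpa [smul_eq_mul] using heq⟩

/-- Common-power representation of two analytic functions:
either write `v = (t-t₀)^a * v₂` where `a` is at most the order of `u`. -/
lemma sqrt_aux {u v : ℝ → ℝ} {t₀ : ℝ} (hu : AnalyticAt ℝ u t₀) (hv : AnalyticAt ℝ v t₀)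
    (hle : analyticOrderAt u t₀ ≤ analyticOrderAt v t₀) :
    ∃ r : ℝ → ℝ, AnalyticAt ℝ r t₀ ∧
      ∀ᶠ t in 𝓝 t₀, Real.sqrt (u t ^ 4 + v t ^ 4) = r t := by
  cases h : analyticOrderAt u t₀ with
  | top =>
    have hvt : analyticOrderAt v t₀ = ⊤ := top_le_iff.mp (h ▸ hle)
    refine ⟨0, analyticAt_const, ?_⟩
    filter_upwards [analyticOrderAt_eq_top.mp h, analyticOrderAt_eq_top.mp hvt] with t h1 h2
    simp [h1, h2]
  | coe a =>
    obtain ⟨u₁, hu₁, hu₁0, hueq⟩ := hu.analyticOrderAt_eq_natCast.mp h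
    -- represent v = (t - t₀)^a * v₂
    have hv2 : ∃ v₂ : ℝ → ℝ, AnalyticAt ℝ v₂ t₀ ∧
        ∀ᶠ t in 𝓝 t₀, v t = (t - t₀) ^ a * v₂ t := by
      cases h2 : analyticOrderAt v t₀ with
      | top =>
        refine ⟨0, analyticAt_const, ?_⟩
        filter_upwards [analyticOrderAt_eq_top.mp h2] with t ht; simp [ht]
      | coe b =>
        have hab : a ≤ b := by
          rw [h, h2] at hle; exact_mod_cast hle
        obtain ⟨v₁, hv₁, hv₁0, hveq⟩ := hv.analyticOrderAt_eq_natCast.mp h2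
        refine ⟨fun t => (t - t₀) ^ (b - a) * v₁ t,
          ((analyticAt_id.sub analyticAt_const).pow _).mul hv₁, ?_⟩
        filter_upwards [hveq] with t ht
        rw [ht, smul_eq_mul, ← mul_assoc, ← pow_add, Nat.add_sub_cancel' hab]
    obtain ⟨v₂, hv₂, hveq⟩ := hv2
    set Q : ℝ → ℝ := fun t => u₁ t ^ 4 + v₂ t ^ 4 with hQdef
    have hQ : AnalyticAt ℝ Q t₀ := (hu₁.pow 4).add (hv₂.pow 4)
    have hQ0 : 0 < Q t₀ := by
      have : 0 < u₁ t₀ ^ 4 := by positivity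
      have h2 : 0 ≤ v₂ t₀ ^ 4 := by positivity
      simp only [hQdef]; linarith
    refine ⟨fun t => ((t - t₀) ^ a) ^ 2 * Real.sqrt (Q t),
      ((((analyticAt_id.sub analyticAt_const).pow _)).pow 2).mul
        ((analyticAt_sqrt hQ0).comp hQ), ?_⟩
    have hQpos : ∀ᶠ t in 𝓝 t₀, 0 < Q t :=
      Filter.Tendsto.eventually_const_lt hQ0 hQ.continuousAt.tendsto |>.mono (fun _ h => h)
    filter_upwards [hueq, hveq, hQpos] with t h1 h2 h3
    have key : u t ^ 4 + v t ^ 4 = (((t - t₀) ^ a) ^ 2) ^ 2 * Q t := by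
      rw [h1, h2, smul_eq_mul, hQdef]; ring
    rw [key, Real.sqrt_mul (by positivity), Real.sqrt_sq (by positivity)]

lemma main_aux {x y z w : ℝ → ℝ} {t₀ : ℝ} (hx : AnalyticAt ℝ x t₀) (hy : AnalyticAt ℝ y t₀)
    (hz : AnalyticAt ℝ z t₀) (hw : AnalyticAt ℝ w t₀) :
    AnalyticAt ℝ (fun t => if x t ^ 2 + y t ^ 2 * Real.sqrt (z t ^ 4 + w t ^ 4) ≠ 0 then
      x t ^ 4 / (x t ^ 2 + y t ^ 2 * Real.sqrt (z t ^ 4 + w t ^ 4)) else 0) t₀ := by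
  -- get an analytic representative of the square root along the arc
  obtain ⟨r, hr, hreq⟩ : ∃ r : ℝ → ℝ, AnalyticAt ℝ r t₀ ∧
      ∀ᶠ t in 𝓝 t₀, Real.sqrt (z t ^ 4 + w t ^ 4) = r t := by
    rcases le_total (analyticOrderAt z t₀) (analyticOrderAt w t₀) with hle | hle
    · exact sqrt_aux hz hw hle
    · obtain ⟨r, hr, hreq⟩ := sqrt_aux hw hz hle
      exact ⟨r, hr, by filter_upwards [hreq] with t ht; rw [add_comm]; exact ht⟩
  have hrnn : ∀ᶠ t in 𝓝 t₀, 0 ≤ r t := by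
    filter_upwards [hreq] with t ht; rw [← ht]; exact Real.sqrt_nonneg _
  set d : ℝ → ℝ := fun t => x t ^ 2 + y t ^ 2 * r t with hddef
  have hd : AnalyticAt ℝ d t₀ := (hx.pow 2).add ((hy.pow 2).mul hr)
  have hdeq : ∀ᶠ t in 𝓝 t₀, x t ^ 2 + y t ^ 2 * Real.sqrt (z t ^ 4 + w t ^ 4) = d t := by
    filter_upwards [hreq] with t ht; rw [ht]
  rcases factor_aux hx with hx0 | ⟨a, x₁, hx₁, hx₁0, hxeq⟩
  · -- x vanishes identically near t₀
    apply (analyticAt_const (v := (0:ℝ))).congr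
    filter_upwards [hx0] with t ht
    simp only [ht]
    norm_num
  rcases factor_aux hd with hd0 | ⟨N, D, hD, hD0, hdfac⟩
  · -- denominator vanishes identically near t₀
    apply (analyticAt_const (v := (0:ℝ))).congr
    filter_upwards [hd0, hdeq] with t ht hde
    rw [eq_comm, if_neg]
    rw [hde, ht]; simp
  -- main case
  have hN2a : N ≤ 2 * a := by
    by_contra hc
    push_neg at hc
    have h1 : ∀ᶠ t in 𝓝[>] t₀, x₁ t ^ 2 ≤ (t - t₀) ^ (N - 2 * a) * D t := by
      have h2 : ∀ᶠ t in 𝓝 t₀, ((t - t₀) ^ a * x₁ t) ^ 2 ≤ (t - t₀) ^ N * D t := by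
        filter_upwards [hxeq, hdfac, hrnn] with t h1 h2 h3
        have : x t ^ 2 ≤ d t := by
          have : 0 ≤ y t ^ 2 * r t := by positivity
          simp only [hddef]; linarith
        rw [← h1, ← h2]; exact this
      rw [eventually_nhdsWithin_iff]
      filter_upwards [h2] with t h2 ht
      have hs : 0 < t - t₀ := sub_pos.mpr ht
      have hpow : (t - t₀) ^ N = (t - t₀) ^ (2 * a) * (t - t₀) ^ (N - 2 * a) := by
        rw [← pow_add]; congr 1; omega
      rw [hpow, mul_assoc] at h2
      have h4 : ((t - t₀) ^ a * x₁ t) ^ 2 = (t - t₀) ^ (2 * a) * x₁ t ^ 2 := by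
        rw [mul_pow, ← pow_mul, mul_comm a 2]
      rw [h4] at h2
      exact le_of_mul_le_mul_left h2 (pow_pos hs _)
    have hG : Filter.Tendsto (fun t => (t - t₀) ^ (N - 2 * a) * D t) (𝓝[>] t₀)
        (𝓝 0) := by
      have hc2 : ContinuousAt (fun t => (t - t₀) ^ (N - 2 * a) * D t) t₀ :=
        (((continuous_id.sub continuous_const).pow _).continuousAt).mul hD.continuousAt
      have h0 : (fun t => (t - t₀) ^ (N - 2 * a) * D t) t₀ = 0 := by
        simp [zero_pow (by omega : N - 2 * a ≠ 0)]
      exact h0 ▸ hc2.tendsto.mono_left nhdsWithin_le_nhds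
    have hH : Filter.Tendsto (fun t => x₁ t ^ 2) (𝓝[>] t₀) (𝓝 (x₁ t₀ ^ 2)) :=
      ((hx₁.continuousAt.pow 2).tendsto).mono_left nhdsWithin_le_nhds
    have := le_of_tendsto_of_tendsto hH hG h1
    have : 0 < x₁ t₀ ^ 2 := by positivity
    linarith [le_of_tendsto_of_tendsto hH hG h1]
  have hN4a : N ≤ 4 * a := by omega
  have hDne : ∀ᶠ t in 𝓝 t₀, D t ≠ 0 := hD.continuousAt.eventually_ne hD0
  apply AnalyticAt.congr
    (f := fun t => (t - t₀) ^ (4 * a - N) * (x₁ t ^ 4 / D t))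
    (((analyticAt_id.sub analyticAt_const).pow _).mul ((hx₁.pow 4).div hD hD0))
  filter_upwards [hxeq, hdfac, hdeq, hDne] with t hxe hde hdq hDn
  rw [← hdq] at hde
  by_cases ht : t = t₀
  · subst ht
    simp only [sub_self] at hxe hde ⊢
    by_cases hN : N = 0
    · subst hN
      rw [if_pos (by rw [hde]; simpa using hDn)]
      rw [hde, hxe]
      by_cases ha : a = 0
      · subst ha; simp
      · rw [zero_pow ha, zero_pow (by omega : 4 * a - 0 ≠ 0)]
        simp [zero_pow (by norm_num : (4:ℕ) ≠ 0)]
    · rw [if_neg (by rw [hde]; simp [zero_pow hN])]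
      rw [zero_pow (by omega : 4 * a - N ≠ 0), zero_mul]
  · have hs : t - t₀ ≠ 0 := sub_ne_zero.mpr ht
    rw [if_pos (by rw [hde]; exact mul_ne_zero (pow_ne_zero _ hs) hDn)]
    rw [hde, hxe]
    have hpow : (t - t₀) ^ (4 * a) = (t - t₀) ^ (4 * a - N) * (t - t₀) ^ N := by
      rw [← pow_add]; congr 1; omega
    field_simp
    rw [← pow_mul, mul_comm a 4, hpow]
    ring

/-- The function `φ₂(x,y,z,w) = x⁴ / (x² + y²·√(z⁴ + w⁴))` (extended by `0` where the
denominator vanishes) is arc-analytic on `ℝ⁴`. -/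
theorem arcAnalytic_phi2_dim4 (φ₂ : ℝ × ℝ × ℝ × ℝ → ℝ)
    (hφ₂ : ∀ p : ℝ × ℝ × ℝ × ℝ,
      φ₂ p = if p.1 ^ 2 + p.2.1 ^ 2 * Real.sqrt (p.2.2.1 ^ 4 + p.2.2.2 ^ 4) ≠ 0 then
          p.1 ^ 4 / (p.1 ^ 2 + p.2.1 ^ 2 * Real.sqrt (p.2.2.1 ^ 4 + p.2.2.2 ^ 4))
        else 0) :
    ArcAnalytic φ₂ := by
  intro γ hγ t₀ ht₀
  have hγt : AnalyticAt ℝ γ t₀ := hγ t₀ ht₀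
  have h2 : AnalyticAt ℝ (fun t => (γ t).2) t₀ :=
    ((ContinuousLinearMap.snd ℝ ℝ (ℝ × ℝ × ℝ)).analyticAt _).comp hγt
  have h3 : AnalyticAt ℝ (fun t => (γ t).2.2) t₀ :=
    ((ContinuousLinearMap.snd ℝ ℝ (ℝ × ℝ)).analyticAt _).comp h2
  have hx : AnalyticAt ℝ (fun t => (γ t).1) t₀ :=
    ((ContinuousLinearMap.fst ℝ ℝ (ℝ × ℝ × ℝ)).analyticAt _).comp hγt
  have hy : AnalyticAt ℝ (fun t => (γ t).2.1) t₀ :=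
    ((ContinuousLinearMap.fst ℝ ℝ (ℝ × ℝ)).analyticAt _).comp h2
  have hz : AnalyticAt ℝ (fun t => (γ t).2.2.1) t₀ :=
    ((ContinuousLinearMap.fst ℝ ℝ ℝ).analyticAt _).comp h3
  have hw : AnalyticAt ℝ (fun t => (γ t).2.2.2) t₀ :=
    ((ContinuousLinearMap.snd ℝ ℝ ℝ).analyticAt _).comp h3
  exact (main_aux hx hy hz hw).congr
    (Filter.Eventually.of_forall fun t => (hφ₂ (γ t)).symm)
end

section
/- Define φ₁ : ℝ⁴ → ℝ by φ₁(x,y,z,w) = √(z⁴ + w⁴), and φ₂ : ℝ⁴ → ℝ by φ₂(x,y,z,w) = x⁴ / (x² + y²·√(z⁴ + w⁴)) whenever x² + y²·√(z⁴ + w⁴) ≠ 0 and φ₂(x,y,z,w) = 0 otherwise. Then φ₁ and φ₂ are continuous on ℝ⁴ and satisfy x⁴·y²·φ₁(x,y,z,w) + (x⁴ − y⁴·(z⁴ + w⁴))·φ₂(x,y,z,w) = x⁶ for all (x,y,z,w) ∈ ℝ⁴. -/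
/-- With `φ₁(x,y,z,w) = √(z⁴ + w⁴)` and `φ₂(x,y,z,w) = x⁴ / (x² + y²·√(z⁴ + w⁴))`
(extended by `0` where the denominator vanishes), both `φ₁` and `φ₂` are continuous on `ℝ⁴`
and satisfy `x⁴·y²·φ₁ + (x⁴ − y⁴·(z⁴ + w⁴))·φ₂ = x⁶` everywhere. -/
theorem continuous_solution_of_equation_dim4 (φ₁ φ₂ : ℝ × ℝ × ℝ × ℝ → ℝ)
    (hφ₁ : ∀ p : ℝ × ℝ × ℝ × ℝ, φ₁ p = Real.sqrt (p.2.2.1 ^ 4 + p.2.2.2 ^ 4))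
    (hφ₂ : ∀ p : ℝ × ℝ × ℝ × ℝ,
      φ₂ p = if p.1 ^ 2 + p.2.1 ^ 2 * Real.sqrt (p.2.2.1 ^ 4 + p.2.2.2 ^ 4) ≠ 0 then
          p.1 ^ 4 / (p.1 ^ 2 + p.2.1 ^ 2 * Real.sqrt (p.2.2.1 ^ 4 + p.2.2.2 ^ 4))
        else 0) :
    Continuous φ₁ ∧ Continuous φ₂ ∧
      ∀ x y z w : ℝ,
        x ^ 4 * y ^ 2 * φ₁ (x, y, z, w) +
          (x ^ 4 - y ^ 4 * (z ^ 4 + w ^ 4)) * φ₂ (x, y, z, w) = x ^ 6 := by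
  have hsnn : ∀ p : ℝ × ℝ × ℝ × ℝ, 0 ≤ Real.sqrt (p.2.2.1 ^ 4 + p.2.2.2 ^ 4) :=
    fun p => Real.sqrt_nonneg _
  -- rewrite φ₂ as a plain quotient (division by zero is zero in ℝ)
  have hφ₂' : ∀ p : ℝ × ℝ × ℝ × ℝ,
      φ₂ p = p.1 ^ 4 / (p.1 ^ 2 + p.2.1 ^ 2 * Real.sqrt (p.2.2.1 ^ 4 + p.2.2.2 ^ 4)) := by
    intro p
    rw [hφ₂ p]
    by_cases h : p.1 ^ 2 + p.2.1 ^ 2 * Real.sqrt (p.2.2.1 ^ 4 + p.2.2.2 ^ 4) ≠ 0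
    · simp [h]
    · push_neg at h
      simp [h]
  have hdnn : ∀ p : ℝ × ℝ × ℝ × ℝ,
      0 ≤ p.1 ^ 2 + p.2.1 ^ 2 * Real.sqrt (p.2.2.1 ^ 4 + p.2.2.2 ^ 4) := by
    intro p
    have := hsnn p
    positivity
  have hub : ∀ p : ℝ × ℝ × ℝ × ℝ, φ₂ p ≤ p.1 ^ 2 := by
    intro p
    rw [hφ₂' p]
    by_cases hx : p.1 = 0
    · simp [hx]
    · have hx2 : (0:ℝ) < p.1 ^ 2 := by positivity
      have hden : p.1 ^ 2 ≤ p.1 ^ 2 + p.2.1 ^ 2 * Real.sqrt (p.2.2.1 ^ 4 + p.2.2.2 ^ 4) := by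
        have h1 : 0 ≤ p.2.1 ^ 2 * Real.sqrt (p.2.2.1 ^ 4 + p.2.2.2 ^ 4) :=
          mul_nonneg (by positivity) (hsnn p)
        linarith
      calc p.1 ^ 4 / (p.1 ^ 2 + p.2.1 ^ 2 * Real.sqrt (p.2.2.1 ^ 4 + p.2.2.2 ^ 4))
          ≤ p.1 ^ 4 / p.1 ^ 2 := by
            exact div_le_div_of_nonneg_left (by positivity) hx2 hden
        _ = p.1 ^ 2 := by
            field_simp
  have hlb : ∀ p : ℝ × ℝ × ℝ × ℝ, 0 ≤ φ₂ p := by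
    intro p
    rw [hφ₂' p]
    exact div_nonneg (by positivity) (hdnn p)
  refine ⟨?_, ?_, ?_⟩
  · have : φ₁ = fun p : ℝ × ℝ × ℝ × ℝ => Real.sqrt (p.2.2.1 ^ 4 + p.2.2.2 ^ 4) := funext hφ₁
    rw [this]
    fun_prop
  · rw [continuous_iff_continuousAt]
    intro p₀
    by_cases h : p₀.1 ^ 2 + p₀.2.1 ^ 2 * Real.sqrt (p₀.2.2.1 ^ 4 + p₀.2.2.2 ^ 4) ≠ 0
    · have hfun : ∀ p : ℝ × ℝ × ℝ × ℝ,
          φ₂ p = p.1 ^ 4 / (p.1 ^ 2 + p.2.1 ^ 2 * Real.sqrt (p.2.2.1 ^ 4 + p.2.2.2 ^ 4)) := hφ₂'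
      rw [show φ₂ = fun p : ℝ × ℝ × ℝ × ℝ =>
          p.1 ^ 4 / (p.1 ^ 2 + p.2.1 ^ 2 * Real.sqrt (p.2.2.1 ^ 4 + p.2.2.2 ^ 4)) from funext hfun]
      exact ContinuousAt.div (by fun_prop) (by fun_prop) h
    · push_neg at h
      have hx0 : p₀.1 = 0 := by
        have h1 : 0 ≤ p₀.2.1 ^ 2 * Real.sqrt (p₀.2.2.1 ^ 4 + p₀.2.2.2 ^ 4) :=
          mul_nonneg (by positivity) (hsnn p₀)
        nlinarith [sq_nonneg p₀.1]
      have hval : φ₂ p₀ = 0 := le_antisymm (by simpa [hx0] using hub p₀) (hlb p₀)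
      rw [ContinuousAt, hval]
      have htend : Filter.Tendsto (fun p : ℝ × ℝ × ℝ × ℝ => p.1 ^ 2) (nhds p₀) (nhds 0) := by
        have : Continuous fun p : ℝ × ℝ × ℝ × ℝ => p.1 ^ 2 := by fun_prop
        simpa [hx0] using this.tendsto p₀
      exact squeeze_zero hlb hub htend
  · intro x y z w
    rw [hφ₁, hφ₂]
    simp only
    set s := Real.sqrt (z ^ 4 + w ^ 4) with hs
    have hs2 : s ^ 2 = z ^ 4 + w ^ 4 := Real.sq_sqrt (by positivity)
    by_cases h : x ^ 2 + y ^ 2 * s ≠ 0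
    · rw [if_pos h]
      field_simp
      linear_combination (x ^ 4 * y ^ 4) * hs2
    · push_neg at h
      rw [if_neg (by simpa using h)]
      have hsn : 0 ≤ s := Real.sqrt_nonneg _
      have hx0 : x = 0 := by nlinarith [sq_nonneg x, mul_nonneg (sq_nonneg y) hsn]
      simp [hx0]
end

section
/- Let ψ₁, ψ₂ : ℝ⁴ → ℝ be continuous functions satisfying x⁴·y²·ψ₁(x,y,z,w) + (x⁴ − y⁴·(z⁴ + w⁴))·ψ₂(x,y,z,w) = x⁶ for all (x,y,z,w) ∈ ℝ⁴. Then ψ₁(0,0,c,d) = √(c⁴ + d⁴) for all real numbers c, d. -/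
/-- If `ψ₁, ψ₂ : ℝ⁴ → ℝ` are continuous and satisfy
`x⁴·y²·ψ₁(x,y,z,w) + (x⁴ − y⁴·(z⁴ + w⁴))·ψ₂(x,y,z,w) = x⁶` everywhere, then
`ψ₁(0,0,c,d) = √(c⁴ + d⁴)` for all real `c, d`. -/
theorem continuous_solution_forces_sqrt (ψ₁ ψ₂ : ℝ × ℝ × ℝ × ℝ → ℝ)
    (hψ₁ : Continuous ψ₁) (hψ₂ : Continuous ψ₂)
    (heq : ∀ x y z w : ℝ,
      x ^ 4 * y ^ 2 * ψ₁ (x, y, z, w) +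
        (x ^ 4 - y ^ 4 * (z ^ 4 + w ^ 4)) * ψ₂ (x, y, z, w) = x ^ 6) :
    ∀ c d : ℝ, ψ₁ (0, 0, c, d) = Real.sqrt (c ^ 4 + d ^ 4) := by
  have key : ∀ c d : ℝ, 0 < c ^ 4 + d ^ 4 →
      ψ₁ (0, 0, c, d) = Real.sqrt (c ^ 4 + d ^ 4) := by
    intro c d hpos
    set s := Real.sqrt (Real.sqrt (c ^ 4 + d ^ 4)) with hs
    have hs4 : s ^ 4 = c ^ 4 + d ^ 4 := by
      rw [hs, show (4 : ℕ) = 2 * 2 from rfl, pow_mul,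
        Real.sq_sqrt (Real.sqrt_nonneg _), Real.sq_sqrt hpos.le]
    have hspos : 0 < s := Real.sqrt_pos.2 (Real.sqrt_pos.2 hpos)
    have hval : ∀ t : ℝ, t ≠ 0 → ψ₁ (t * s, t, c, d) = s ^ 2 := by
      intro t ht
      have h := heq (t * s) t c d
      have h6 : (s ^ 4 * t ^ 6) * ψ₁ (t * s, t, c, d) = (s ^ 4 * t ^ 6) * s ^ 2 := by
        linear_combination h - t ^ 4 * ψ₂ (t * s, t, c, d) * hs4
      have hne : s ^ 4 * t ^ 6 ≠ 0 :=
        mul_ne_zero (pow_ne_zero _ hspos.ne') (pow_ne_zero _ ht)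
      exact mul_left_cancel₀ hne h6
    have h1 : Filter.Tendsto (fun t : ℝ => ψ₁ (t * s, t, c, d)) (nhdsWithin 0 {0}ᶜ)
        (nhds (ψ₁ (0, 0, c, d))) := by
      have hc : Continuous (fun t : ℝ => ψ₁ (t * s, t, c, d)) := by
        apply hψ₁.comp; continuity
      have := hc.tendsto 0
      simp only [zero_mul] at this
      exact this.mono_left nhdsWithin_le_nhds
    have h2 : Filter.Tendsto (fun t : ℝ => ψ₁ (t * s, t, c, d)) (nhdsWithin 0 {0}ᶜ)
        (nhds (s ^ 2)) := by
      apply Filter.Tendsto.congr' _ tendsto_const_nhds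
      filter_upwards [self_mem_nhdsWithin] with t ht
      exact (hval t ht).symm
    rw [tendsto_nhds_unique h1 h2, hs, Real.sq_sqrt (Real.sqrt_nonneg _)]
  intro c d
  rcases (lt_or_eq_of_le (by positivity : (0:ℝ) ≤ c ^ 4 + d ^ 4)) with hpos | hzero
  · exact key c d hpos
  · have hc4 : c ^ 4 = 0 := by nlinarith [sq_nonneg (c^2), sq_nonneg (d^2)]
    have hd4 : d ^ 4 = 0 := by nlinarith [sq_nonneg (c^2), sq_nonneg (d^2)]
    have hc : c = 0 := by
      simpa using pow_eq_zero_iff (n := 4) (by norm_num) |>.1 hc4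
    have hd : d = 0 := by
      simpa using pow_eq_zero_iff (n := 4) (by norm_num) |>.1 hd4
    subst hc; subst hd
    have h1 : Filter.Tendsto (fun t : ℝ => ψ₁ (0, 0, t, 0)) (nhdsWithin 0 {0}ᶜ)
        (nhds (ψ₁ (0, 0, 0, 0))) := by
      have hc : Continuous (fun t : ℝ => ψ₁ (0, 0, t, 0)) := by fun_prop
      exact (hc.tendsto 0).mono_left nhdsWithin_le_nhds
    have h2 : Filter.Tendsto (fun t : ℝ => ψ₁ (0, 0, t, 0)) (nhdsWithin 0 {0}ᶜ)
        (nhds 0) := by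
      have : Filter.Tendsto (fun t : ℝ => Real.sqrt (t ^ 4 + 0 ^ 4))
          (nhdsWithin 0 {0}ᶜ) (nhds 0) := by
        have : Filter.Tendsto (fun t : ℝ => Real.sqrt (t ^ 4 + 0 ^ 4)) (nhds 0)
            (nhds 0) := by
          have hcont : Continuous (fun t : ℝ => Real.sqrt (t ^ 4 + 0 ^ 4)) := by
            fun_prop
          have := hcont.tendsto 0
          norm_num at this
          simpa using this
        exact this.mono_left nhdsWithin_le_nhds
      apply Filter.Tendsto.congr' _ this
      filter_upwards [self_mem_nhdsWithin] with t ht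
      have hpos : 0 < t ^ 4 + 0 ^ 4 := by
        have : t ≠ 0 := ht
        positivity
      exact (key t 0 hpos).symm
    rw [tendsto_nhds_unique h1 h2]
    simp
end

section
/- There do not exist Nash regulous functions ψ₁, ψ₂ : ℝ⁴ → ℝ satisfying x⁴·y²·ψ₁(x,y,z,w) + (x⁴ − y⁴·(z⁴ + w⁴))·ψ₂(x,y,z,w) = x⁶ for all (x,y,z,w) ∈ ℝ⁴. -/
open Filter Function Topology

namespace NashAux


lemma coeff_zero_eq {u : ℝ → ℝ} {A : FormalMultilinearSeries ℝ ℝ ℝ}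
    (hA : HasFPowerSeriesAt u A 0) : A.coeff 0 = u 0 := by
  have h := hA.coeff_zero (fun _ => (1:ℝ))
  rw [FormalMultilinearSeries.coeff]
  convert h using 2

/-- coefficient = iterated derivative / factorial, 1-D -/
lemma coeff_eq_iteratedDeriv {u : ℝ → ℝ} {A : FormalMultilinearSeries ℝ ℝ ℝ}
    (hA : HasFPowerSeriesAt u A 0) (j : ℕ) :
    A.coeff j = iteratedDeriv j u 0 / (Nat.factorial j : ℝ) := by
  obtain ⟨r, hball⟩ := hA
  have h1 := hball.factorial_smul (1 : ℝ) j
  rw [iteratedDeriv_eq_iteratedFDeriv]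
  have h2 : A.coeff j = A j (fun _ => (1:ℝ)) := by
    rw [FormalMultilinearSeries.coeff]; congr
  rw [h2, ← h1]
  field_simp
  rw [nsmul_eq_mul, mul_comm]

/-- iterated dslope equals division by t^m -/
lemma iterate_dslope_eq_div :
    ∀ (m : ℕ) (u : ℝ → ℝ) (A : FormalMultilinearSeries ℝ ℝ ℝ),
      HasFPowerSeriesAt u A 0 → (∀ j < m, A.coeff j = 0) →
      ∀ t : ℝ, t ≠ 0 → (swap dslope 0)^[m] u t = u t / t ^ m := by
  intro m
  induction m with
  | zero => intro u A _ _ t _; simp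
  | succ m ih =>
    intro u A hA hc t ht
    have hu0 : u 0 = 0 := by
      rw [← coeff_zero_eq hA]; exact hc 0 (Nat.succ_pos m)
    have hds : HasFPowerSeriesAt (dslope u 0) A.fslope 0 :=
      hA.has_fpower_series_dslope_fslope
    have hc' : ∀ j < m, A.fslope.coeff j = 0 := fun j hj => by
      rw [FormalMultilinearSeries.coeff_fslope]
      exact hc (j + 1) (by omega)
    have h1 : (swap dslope 0)^[m + 1] u t = (swap dslope 0)^[m] (dslope u 0) t := by
      rw [Function.iterate_succ_apply]
    rw [h1, ih (dslope u 0) A.fslope hds hc' t ht]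
    have h2 : dslope u 0 t = u t / t := by
      rw [dslope_of_ne _ ht, slope_def_field]
      simp [hu0]
    rw [h2, div_div, ← pow_succ']

/-- series-level limit lemma -/
lemma tendsto_div_pow_of_coeff {u : ℝ → ℝ} {A : FormalMultilinearSeries ℝ ℝ ℝ}
    (hA : HasFPowerSeriesAt u A 0) {m : ℕ} (hc : ∀ j < m, A.coeff j = 0) :
    Tendsto (fun t => u t / t ^ m) (𝓝[≠] (0:ℝ)) (𝓝 (A.coeff m)) := by
  have hiter : HasFPowerSeriesAt ((swap dslope 0)^[m] u) (FormalMultilinearSeries.fslope^[m] A) 0 :=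
    hA.has_fpower_series_iterate_dslope_fslope m
  have hval : (swap dslope 0)^[m] u 0 = A.coeff m := by
    rw [← coeff_zero_eq hiter, FormalMultilinearSeries.coeff_iterate_fslope]
    simp
  have hcont : Tendsto ((swap dslope 0)^[m] u) (𝓝[≠] (0:ℝ)) (𝓝 (A.coeff m)) := by
    rw [← hval]
    exact (hiter.continuousAt.tendsto).mono_left nhdsWithin_le_nhds
  refine hcont.congr' ?_
  filter_upwards [self_mem_nhdsWithin] with t ht
  exact iterate_dslope_eq_div m u A hA hc t ht





/-- (L_d) : derivative-form limit lemma -/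
lemma tendsto_div_pow_of_deriv {u : ℝ → ℝ} (hu : AnalyticAt ℝ u 0) {m : ℕ}
    (h : ∀ j < m, iteratedDeriv j u 0 = 0) :
    Tendsto (fun t => u t / t ^ m) (𝓝[≠] (0:ℝ))
      (𝓝 (iteratedDeriv m u 0 / (Nat.factorial m : ℝ))) := by
  obtain ⟨A, hA⟩ := hu
  have hc : ∀ j < m, A.coeff j = 0 := fun j hj => by
    rw [coeff_eq_iteratedDeriv hA, h j hj]; simp
  have := tendsto_div_pow_of_coeff hA hc
  rwa [coeff_eq_iteratedDeriv hA] at this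

/-- (L2sq_d) : if u² / t^{2k} tends to M then lower derivatives vanish and
the k-th Taylor coefficient squared is M. -/
lemma sq_coeff_of_tendsto_sq {u : ℝ → ℝ} (hu : AnalyticAt ℝ u 0) {k : ℕ} {M : ℝ}
    (hT : Tendsto (fun t => (u t) ^ 2 / t ^ (2 * k)) (𝓝[≠] (0:ℝ)) (𝓝 M)) :
    (∀ j < k, iteratedDeriv j u 0 = 0) ∧
      (iteratedDeriv k u 0 / (Nat.factorial k : ℝ)) ^ 2 = M := by
  have hZ : ∀ j < k, iteratedDeriv j u 0 = 0 := by
    intro j hj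
    induction j using Nat.strong_induction_on with
    | _ j ih =>
      have hlow : ∀ i < j, iteratedDeriv i u 0 = 0 := fun i hi => ih i hi (lt_trans hi hj)
      have h1 := tendsto_div_pow_of_deriv hu hlow
      have h2 : Tendsto (fun t => (u t / t ^ j) ^ 2) (𝓝[≠] (0:ℝ))
          (𝓝 ((iteratedDeriv j u 0 / (Nat.factorial j : ℝ)) ^ 2)) := h1.pow 2
      have h3 : Tendsto (fun t => (u t / t ^ j) ^ 2) (𝓝[≠] (0:ℝ)) (𝓝 0) := by
        have h4 : Tendsto (fun t : ℝ => (u t) ^ 2 / t ^ (2 * k) * t ^ (2 * (k - j)))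
            (𝓝[≠] (0:ℝ)) (𝓝 (M * 0)) := by
          apply hT.mul
          have hne : 2 * (k - j) ≠ 0 := by omega
          simpa [zero_pow hne] using
            ((continuous_pow (2 * (k-j))).tendsto (0:ℝ)).mono_left nhdsWithin_le_nhds
        rw [mul_zero] at h4
        refine h4.congr' ?_
        filter_upwards [self_mem_nhdsWithin] with t ht
        have ht' : t ≠ 0 := ht
        rw [div_pow, ← pow_mul]
        have hsplit : t ^ (2 * k) = t ^ (j * 2) * t ^ (2 * (k - j)) := by
          rw [← pow_add]; congr 1; omega
        rw [hsplit, ← div_div, div_mul_cancel₀ _ (pow_ne_zero _ ht')]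
      have := tendsto_nhds_unique h2 h3
      have h5 : iteratedDeriv j u 0 / (Nat.factorial j : ℝ) = 0 := by
        exact pow_eq_zero_iff (n := 2) (by norm_num) |>.mp this
      field_simp at h5
      simpa using h5
  refine ⟨hZ, ?_⟩
  have h1 := (tendsto_div_pow_of_deriv hu hZ).pow 2
  have h2 : Tendsto (fun t => (u t / t ^ k) ^ 2) (𝓝[≠] (0:ℝ)) (𝓝 M) := by
    refine hT.congr' ?_
    filter_upwards [self_mem_nhdsWithin] with t ht
    rw [div_pow, ← pow_mul, Nat.mul_comm]
  exact tendsto_nhds_unique h1 h2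

/-- (L2_d) : limits determine Taylor coefficients -/
lemma coeff_of_tendsto {u : ℝ → ℝ} (hu : AnalyticAt ℝ u 0) {m : ℕ} {L : ℝ}
    (hT : Tendsto (fun t => u t / t ^ m) (𝓝[≠] (0:ℝ)) (𝓝 L)) :
    (∀ j < m, iteratedDeriv j u 0 = 0) ∧
      iteratedDeriv m u 0 / (Nat.factorial m : ℝ) = L := by
  have hZ : ∀ j < m, iteratedDeriv j u 0 = 0 := by
    intro j hj
    induction j using Nat.strong_induction_on with
    | _ j ih =>
      have hlow : ∀ i < j, iteratedDeriv i u 0 = 0 := fun i hi => ih i hi (lt_trans hi hj)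
      have h1 := tendsto_div_pow_of_deriv hu hlow
      have h3 : Tendsto (fun t => u t / t ^ j) (𝓝[≠] (0:ℝ)) (𝓝 0) := by
        have h4 : Tendsto (fun t : ℝ => u t / t ^ m * t ^ (m - j))
            (𝓝[≠] (0:ℝ)) (𝓝 (L * 0)) := by
          apply hT.mul
          have hne : m - j ≠ 0 := by omega
          simpa [zero_pow hne] using
            ((continuous_pow (m-j)).tendsto (0:ℝ)).mono_left nhdsWithin_le_nhds
        rw [mul_zero] at h4
        refine h4.congr' ?_
        filter_upwards [self_mem_nhdsWithin] with t ht
        have ht' : t ≠ 0 := ht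
        have hsplit : t ^ m = t ^ j * t ^ (m - j) := by
          rw [← pow_add]; congr 1; omega
        rw [hsplit, ← div_div, div_mul_cancel₀ _ (pow_ne_zero _ ht')]
      have h5 := tendsto_nhds_unique h1 h3
      field_simp at h5
      simpa using h5
  refine ⟨hZ, tendsto_nhds_unique (tendsto_div_pow_of_deriv hu hZ) hT⟩

/-- (Z_d) : all derivatives vanish implies identically zero -/
lemma zero_of_deriv_zero {u : ℝ → ℝ} (hu : AnalyticOnNhd ℝ u Set.univ)
    (h : ∀ n, iteratedDeriv n u 0 = 0) : ∀ t, u t = 0 := by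
  obtain ⟨A, hA⟩ := hu 0 (Set.mem_univ _)
  have hc : A = 0 := by
    ext n v
    have h1 : A n = 0 := by
      rw [← FormalMultilinearSeries.coeff_eq_zero (p := A) (n := n),
        coeff_eq_iteratedDeriv hA, h n]
      simp
    rw [h1]
    rfl
  have hev : ∀ᶠ z in 𝓝 (0:ℝ), u z = 0 := hA.locally_zero_iff.mpr hc
  intro t
  have := hu.eqOn_zero_of_preconnected_of_eventuallyEq_zero
    isPreconnected_univ (Set.mem_univ (0:ℝ)) hev (Set.mem_univ t)
  exact this



section PolyDescent
open Polynomial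

noncomputable def zeta : ℂ := (1 + Complex.I) / (Real.sqrt 2 : ℝ)

lemma zeta_sq : zeta ^ 2 = Complex.I := by
  rw [zeta, div_pow]
  have h2 : ((Real.sqrt 2 : ℝ) : ℂ) ^ 2 = 2 := by
    rw [← Complex.ofReal_pow]
    norm_cast
    rw [Real.sq_sqrt] <;> norm_num
  rw [h2]
  have : (1 + Complex.I) ^ 2 = 2 * Complex.I := by
    ring_nf
    rw [Complex.I_sq]
    ring
  rw [this]
  ring

lemma zeta_pow4 : zeta ^ 4 = -1 := by
  have : zeta ^ 4 = (zeta ^ 2) ^ 2 := by ring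
  rw [this, zeta_sq, Complex.I_sq]

lemma zeta_ne_zero : zeta ≠ 0 := by
  intro h
  have := zeta_pow4
  rw [h] at this
  norm_num at this

lemma quartic_factor :
    (1 + X ^ 4 : ℂ[X]) =
      (X - C zeta) * ((X + C zeta) * (X ^ 2 + C Complex.I)) := by
  have hCI : (C Complex.I : ℂ[X]) = (C zeta) ^ 2 := by rw [← C_pow, zeta_sq]
  have h4 : (C zeta : ℂ[X]) ^ 4 = C (zeta ^ 4) := by rw [C_pow]
  have : (X - C zeta) * ((X + C zeta) * (X ^ 2 + (C zeta) ^ 2))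
      = X ^ 4 - (C zeta) ^ 4 := by ring
  rw [hCI, this, h4, zeta_pow4]
  simp [map_neg]
  ring

lemma descent : ∀ n : ℕ, ∀ q p : ℂ[X], q.natDegree = n → q ≠ 0 →
    p ^ 2 = (1 + X ^ 4) * q ^ 2 → False := by
  intro n
  induction n using Nat.strong_induction_on with
  | _ n ih =>
    intro q p hdeg hq hp
    set R : ℂ[X] := (X + C zeta) * (X ^ 2 + C Complex.I) with hR
    have hXz : (X - C zeta : ℂ[X]) ≠ 0 := X_sub_C_ne_zero zeta
    have hprootp : p.IsRoot zeta := by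
      have h1 : Polynomial.eval zeta (p ^ 2) = Polynomial.eval zeta ((1 + X ^ 4) * q ^ 2) := by rw [hp]
      rw [quartic_factor] at h1
      simp only [eval_mul, eval_pow, eval_sub, eval_X, eval_C, sub_self, zero_mul] at h1
      have : eval zeta p ^ 2 = 0 := h1
      exact pow_eq_zero_iff (by norm_num) |>.mp this
    obtain ⟨p₁, hp₁⟩ := (dvd_iff_isRoot.mpr hprootp)
    have hkey : (X - C zeta) * p₁ ^ 2 = R * q ^ 2 := by
      apply mul_left_cancel₀ hXz
      rw [quartic_factor] at hp
      rw [hp₁] at hp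
      linear_combination hp
    have hqroot : q.IsRoot zeta := by
      have h0 : Polynomial.eval zeta ((X - C zeta) * p₁ ^ 2) = Polynomial.eval zeta (R * q ^ 2) := by rw [hkey]
      rw [eval_mul, eval_mul, eval_pow, eval_pow, eval_sub, eval_X, eval_C,
        sub_self, zero_mul] at h0
      have hRval : eval zeta R = (zeta + zeta) * (zeta ^ 2 + Complex.I) := by
        simp [hR]
      have hRz : eval zeta R ≠ 0 := by
        rw [hRval, zeta_sq]
        apply mul_ne_zero
        · simpa [two_mul] using mul_ne_zero (two_ne_zero (α := ℂ)) zeta_ne_zero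
        · simpa [two_mul] using mul_ne_zero (two_ne_zero (α := ℂ)) Complex.I_ne_zero
      have : eval zeta q ^ 2 = 0 := by
        rcases mul_eq_zero.mp h0.symm with h | h
        · exact absurd h hRz
        · exact h
      exact pow_eq_zero_iff (by norm_num) |>.mp this
    obtain ⟨q₁, hq₁⟩ := (dvd_iff_isRoot.mpr hqroot)
    have hq₁ne : q₁ ≠ 0 := by
      intro h0
      rw [h0, mul_zero] at hq₁
      exact hq hq₁
    have hkey2 : p₁ ^ 2 = (1 + X ^ 4) * q₁ ^ 2 := by
      apply mul_left_cancel₀ hXz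
      rw [quartic_factor]
      rw [hq₁] at hkey
      linear_combination hkey
    have hdeg2 : q₁.natDegree < n := by
      rw [← hdeg, hq₁, natDegree_mul hXz hq₁ne, natDegree_X_sub_C]
      omega
    exact ih q₁.natDegree hdeg2 q₁ p₁ rfl hq₁ne hkey2

lemma no_real_poly_sol (q p : ℝ[X]) (hq : q ≠ 0)
    (hp : p ^ 2 = (1 + X ^ 4) * q ^ 2) : False := by
  have hmap : (p.map (algebraMap ℝ ℂ)) ^ 2
      = (1 + X ^ 4) * (q.map (algebraMap ℝ ℂ)) ^ 2 := by
    have := congrArg (Polynomial.map (algebraMap ℝ ℂ)) hp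
    simpa [Polynomial.map_mul, Polynomial.map_pow, Polynomial.map_add,
      Polynomial.map_one] using this
  refine descent (q.map (algebraMap ℝ ℂ)).natDegree (q.map (algebraMap ℝ ℂ))
    (p.map (algebraMap ℝ ℂ)) rfl ?_ hmap
  exact (Polynomial.map_ne_zero_iff (algebraMap ℝ ℂ).injective).mpr hq



end PolyDescent

abbrev W3 := ℝ × ℝ × ℝ

/-- iterated partial derivative in the first variable -/
noncomputable def partialT (F : W3 → ℝ) : ℕ → W3 → ℝ
  | 0 => F
  | n + 1 => fun p => fderiv ℝ (partialT F n) p (1, 0, 0)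

lemma partialT_analytic {F : W3 → ℝ} (hF : AnalyticOnNhd ℝ F Set.univ) (n : ℕ) :
    AnalyticOnNhd ℝ (partialT F n) Set.univ := by
  induction n with
  | zero => exact hF
  | succ n ih =>
    have h1 : AnalyticOnNhd ℝ (fderiv ℝ (partialT F n)) Set.univ := ih.fderiv
    have h2 : AnalyticOnNhd ℝ (fun p => fderiv ℝ (partialT F n) p ((1:ℝ), (0:ℝ), (0:ℝ)))
        Set.univ := by
      have happ := (ContinuousLinearMap.apply ℝ ℝ ((1:ℝ), (0:ℝ), (0:ℝ))).analyticOnNhd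
        (Set.univ : Set (W3 →L[ℝ] ℝ))
      exact happ.comp h1 (Set.mapsTo_univ _ _)
    exact h2

lemma line_analyticAt {F : W3 → ℝ} (hF : AnalyticOnNhd ℝ F Set.univ) (z w t : ℝ) :
    AnalyticAt ℝ (fun t => F (t, z, w)) t := by
  have hl : AnalyticAt ℝ (fun s : ℝ => ((s, z, w) : W3)) t := by
    apply AnalyticAt.prod analyticAt_id
    exact analyticAt_const
  exact (hF _ (Set.mem_univ _)).comp hl

lemma deriv_line {F : W3 → ℝ} (hF : AnalyticOnNhd ℝ F Set.univ) (z w : ℝ) :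
    deriv (fun t => F (t, z, w)) = fun t => partialT F 1 (t, z, w) := by
  funext t
  have hj : HasFDerivAt (fun s : ℝ => ((s, z, w) : W3))
      ((ContinuousLinearMap.id ℝ ℝ).prod 0) t := by
    exact HasFDerivAt.prodMk (hasFDerivAt_id t) (hasFDerivAt_const _ _)
  have hdF : HasFDerivAt F (fderiv ℝ F (t, z, w)) (t, z, w) :=
    ((hF _ (Set.mem_univ _)).differentiableAt).hasFDerivAt
  have hcomp := hdF.comp t hj
  rw [show (fun t => F (t, z, w)) = F ∘ (fun s : ℝ => ((s, z, w) : W3)) from rfl]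
  rw [hcomp.hasDerivAt.deriv]
  simp [partialT]
  rfl

lemma iteratedDeriv_line {F : W3 → ℝ} (hF : AnalyticOnNhd ℝ F Set.univ) (n : ℕ) (z w : ℝ) :
    iteratedDeriv n (fun t => F (t, z, w)) 0 = partialT F n (0, z, w) := by
  induction n generalizing F with
  | zero => simp [partialT, iteratedDeriv_zero]
  | succ n ih =>
    have hcomm : ∀ m, partialT (partialT F 1) m = partialT F (m + 1) := by
      intro m
      induction m with
      | zero => rfl
      | succ m ihm =>
        show (fun p => fderiv ℝ (partialT (partialT F 1) m) p ((1:ℝ),(0:ℝ),(0:ℝ)))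
          = (fun p => fderiv ℝ (partialT F (m+1)) p ((1:ℝ),(0:ℝ),(0:ℝ)))
        rw [ihm]
    rw [iteratedDeriv_succ', deriv_line hF z w,
      ih (partialT_analytic hF 1), hcomm n]


abbrev V2 := ℝ × ℝ




lemma lineDeriv_eq_series {f : V2 → ℝ} (hf : AnalyticOnNhd ℝ f Set.univ)
    {Φ : FormalMultilinearSeries ℝ V2 ℝ} {r : ENNReal}
    (hΦ : HasFPowerSeriesOnBall f Φ 0 r) (v : V2) (n : ℕ) :
    iteratedDeriv n (fun t : ℝ => f (t • v)) 0
      = (Nat.factorial n : ℝ) * (Φ n (fun _ => v)) := by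
  set Lv : ℝ →L[ℝ] V2 := (ContinuousLinearMap.id ℝ ℝ).smulRight v with hLv
  have h1 : (fun t : ℝ => f (t • v)) = f ∘ Lv := by
    funext t
    simp [hLv]
  have hcd : ContDiff ℝ (⊤ : ℕ∞) f := hf.contDiff
  rw [h1, iteratedDeriv_eq_iteratedFDeriv,
    ContinuousLinearMap.iteratedFDeriv_comp_right Lv hcd 0 (by exact_mod_cast le_top)]
  have h2 : Lv (0:ℝ) = 0 := by simp
  have h3 := hΦ.factorial_smul v n
  rw [ContinuousMultilinearMap.compContinuousLinearMap_apply, h2]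
  have h4 : (fun i : Fin n => Lv 1) = fun _ : Fin n => v := by
    funext i; simp [hLv]
  rw [h4, ← h3]
  simp [nsmul_eq_mul]

noncomputable def seriesPoly (Φ : FormalMultilinearSeries ℝ V2 ℝ) (n : ℕ) : Polynomial ℝ :=
  ∑ s : Finset (Fin n),
    Polynomial.C (Φ n (s.piecewise (fun _ => (((0:ℝ),(1:ℝ)) : V2)) (fun _ => (((1:ℝ),(0:ℝ)) : V2))))
      * Polynomial.X ^ s.card

lemma seriesPoly_eval (Φ : FormalMultilinearSeries ℝ V2 ℝ) (n : ℕ) (c : ℝ) :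
    (seriesPoly Φ n).eval c = Φ n (fun _ => (((1:ℝ), c) : V2)) := by
  classical
  have hv : (fun _ : Fin n => (((1:ℝ), c) : V2))
      = (fun _ : Fin n => c • (((0:ℝ),(1:ℝ)) : V2)) + (fun _ => (((1:ℝ),(0:ℝ)) : V2)) := by
    funext i
    simp [Prod.ext_iff]
  rw [hv]
  have hexp := (Φ n).toMultilinearMap.map_add_univ
    (fun _ : Fin n => c • (((0:ℝ),(1:ℝ)) : V2)) (fun _ => (((1:ℝ),(0:ℝ)) : V2))
  have hcoe : ∀ (m : Fin n → V2), (Φ n).toMultilinearMap m = Φ n m := fun _ => rfl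
  rw [hcoe] at hexp
  rw [hexp]
  rw [seriesPoly, Polynomial.eval_finset_sum]
  apply Finset.sum_congr rfl
  intro s _
  set e1 : V2 := ((0:ℝ),(1:ℝ))
  set e0 : V2 := ((1:ℝ),(0:ℝ))
  set m : Fin n → V2 := s.piecewise (fun _ => e1) (fun _ => e0) with hm
  have hpw : s.piecewise (fun _ : Fin n => c • e1) (fun _ => e0)
      = fun i => (s.piecewise (fun _ : Fin n => c) (fun _ => (1:ℝ))) i • m i := by
    funext i
    by_cases hi : i ∈ s <;> simp [Finset.piecewise, hi, hm]
  simp only [Polynomial.eval_mul, Polynomial.eval_C, Polynomial.eval_pow, Polynomial.eval_X]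
  rw [hpw]
  have h5 : (fun i => Finset.piecewise s (fun _ => c) (fun _ => (1:ℝ)) i • m i)
      = s.piecewise (fun i => c • m i) m := by
    funext i
    by_cases hi : i ∈ s <;> simp [Finset.piecewise, hi]
  rw [h5]
  rw [show (Φ n).toMultilinearMap (s.piecewise (fun i => c • m i) m)
      = (∏ _i ∈ s, c) • (Φ n).toMultilinearMap m from
    (Φ n).toMultilinearMap.map_piecewise_smul _ _ _]
  rw [Finset.prod_const]
  simp [hm, mul_comm, smul_eq_mul]

lemma line_map_analytic (v : V2) :
    AnalyticOnNhd ℝ (fun t : ℝ => t • v) Set.univ := by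
  intro x _
  refine (((ContinuousLinearMap.id ℝ ℝ).smulRight v).analyticAt x).congr ?_
  filter_upwards with t
  simp

lemma stage2 {P Q : V2 → ℝ} (hP : AnalyticOnNhd ℝ P Set.univ)
    (hQ : AnalyticOnNhd ℝ Q Set.univ)
    (hPQ : ∀ q : V2, P q ^ 2 = (q.1 ^ 4 + q.2 ^ 4) * Q q ^ 2)
    (hQne : ∃ q, Q q ≠ 0) : False := by
  classical
  obtain ⟨Φ, hΦat⟩ := hP 0 (Set.mem_univ _)
  obtain ⟨rP, hΦ⟩ := hΦat
  obtain ⟨Ψ, hΨat⟩ := hQ 0 (Set.mem_univ _)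
  obtain ⟨rQ, hΨ⟩ := hΨat
  have hbA : ∀ c : ℝ, AnalyticOnNhd ℝ (fun t : ℝ => Q (t • (((1:ℝ), c) : V2))) Set.univ :=
    fun c => hQ.comp (line_map_analytic _) (Set.mapsTo_univ _ _)
  have haA : ∀ c : ℝ, AnalyticOnNhd ℝ (fun t : ℝ => P (t • (((1:ℝ), c) : V2))) Set.univ :=
    fun c => hP.comp (line_map_analytic _) (Set.mapsTo_univ _ _)
  have hbD : ∀ (c : ℝ) (n : ℕ), iteratedDeriv n (fun t : ℝ => Q (t • (((1:ℝ), c) : V2))) 0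
      = (Nat.factorial n : ℝ) * (seriesPoly Ψ n).eval c := by
    intro c n
    rw [lineDeriv_eq_series hQ hΨ _ n, seriesPoly_eval]
  have haD : ∀ (c : ℝ) (n : ℕ), iteratedDeriv n (fun t : ℝ => P (t • (((1:ℝ), c) : V2))) 0
      = (Nat.factorial n : ℝ) * (seriesPoly Φ n).eval c := by
    intro c n
    rw [lineDeriv_eq_series hP hΦ _ n, seriesPoly_eval]
  have hex : ∃ n, seriesPoly Ψ n ≠ 0 := by
    by_contra hall
    push_neg at hall
    have hzero : ∀ (c t : ℝ), Q (t • (((1:ℝ), c) : V2)) = 0 := by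
      intro c
      apply zero_of_deriv_zero (hbA c)
      intro n
      rw [hbD c n, hall n]
      simp
    have hQ0 : ∀ q : V2, Q q = 0 := by
      intro q
      rcases eq_or_ne q.1 0 with h1 | h1
      · have hcont : Continuous fun z : ℝ => Q (z, q.2) := by
          have hQc : Continuous Q := by
            rw [continuous_iff_continuousAt]
            exact fun x => (hQ x (Set.mem_univ _)).continuousAt
          exact hQc.comp (continuous_id.prodMk continuous_const)
        have hev : ∀ z : ℝ, z ≠ 0 → Q (z, q.2) = 0 := by
          intro z hz
          have h2 := hzero (q.2 / z) z
          have h3 : z • (((1:ℝ), q.2 / z) : V2) = ((z, q.2) : V2) := by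
            ext
            · simp
            · simp [smul_eq_mul, mul_div_cancel₀ _ hz]
          rwa [h3] at h2
        have h2 : Tendsto (fun z : ℝ => Q (z, q.2)) (𝓝[≠] (0:ℝ)) (𝓝 (Q (0, q.2))) :=
          (hcont.tendsto 0).mono_left nhdsWithin_le_nhds
        have h3 : Tendsto (fun z : ℝ => Q (z, q.2)) (𝓝[≠] (0:ℝ)) (𝓝 0) := by
          refine Tendsto.congr' ?_ tendsto_const_nhds
          filter_upwards [self_mem_nhdsWithin] with z hz
          exact (hev z hz).symm
        have h4 := tendsto_nhds_unique h2 h3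
        have hq' : q = ((0:ℝ), q.2) := by
          ext <;> simp [h1]
        rw [hq']
        exact h4
      · have h2 := hzero (q.2 / q.1) q.1
        have h3 : q.1 • (((1:ℝ), q.2 / q.1) : V2) = q := by
          ext
          · simp
          · simp [smul_eq_mul, mul_div_cancel₀ _ h1]
        rwa [h3] at h2
    obtain ⟨q, hq⟩ := hQne
    exact hq (hQ0 q)
  let μ := Nat.find hex
  have hμ : seriesPoly Ψ μ ≠ 0 := Nat.find_spec hex
  have hμmin : ∀ j < μ, seriesPoly Ψ j = 0 := fun j hj => by
    have h := Nat.find_min hex hj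
    push_neg at h
    exact h
  have hSfin : {c : ℝ | (seriesPoly Ψ μ).eval c = 0}.Finite :=
    Polynomial.finite_setOf_isRoot hμ
  have hSinf : {c : ℝ | (seriesPoly Ψ μ).eval c ≠ 0}.Infinite := by
    have h := hSfin.infinite_compl
    convert h using 1
    rfl
  have hkey : ∀ c : ℝ, (seriesPoly Ψ μ).eval c ≠ 0 →
      ((seriesPoly Φ (μ + 2)).eval c) ^ 2
        = (1 + c ^ 4) * ((seriesPoly Ψ μ).eval c) ^ 2 := by
    intro c hc
    have hfacμ : ((Nat.factorial μ : ℕ) : ℝ) ≠ 0 := by positivity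
    have hlow : ∀ j < μ, iteratedDeriv j (fun t : ℝ => Q (t • (((1:ℝ), c) : V2))) 0 = 0 := by
      intro j hj
      rw [hbD c j, hμmin j hj]
      simp
    have hblim : Tendsto (fun t : ℝ => Q (t • (((1:ℝ), c) : V2)) / t ^ μ) (𝓝[≠] (0:ℝ))
        (𝓝 ((seriesPoly Ψ μ).eval c)) := by
      have h1 := tendsto_div_pow_of_deriv ((hbA c) 0 (Set.mem_univ _)) hlow
      rw [hbD c μ, mul_div_cancel_left₀ _ hfacμ] at h1
      exact h1
    have halim : Tendsto (fun t : ℝ => (P (t • (((1:ℝ), c) : V2))) ^ 2 / t ^ (2 * (μ + 2)))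
        (𝓝[≠] (0:ℝ)) (𝓝 ((1 + c ^ 4) * ((seriesPoly Ψ μ).eval c) ^ 2)) := by
      have h1 : Tendsto (fun t : ℝ =>
          (1 + c ^ 4) * (Q (t • (((1:ℝ), c) : V2)) / t ^ μ) ^ 2) (𝓝[≠] (0:ℝ))
          (𝓝 ((1 + c ^ 4) * ((seriesPoly Ψ μ).eval c) ^ 2)) :=
        (hblim.pow 2).const_mul _
      refine h1.congr' ?_
      filter_upwards [self_mem_nhdsWithin] with t ht
      have ht' : (t:ℝ) ≠ 0 := ht
      have hexpand : P (t • (((1:ℝ), c) : V2)) ^ 2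
          = t ^ 4 * (1 + c ^ 4) * Q (t • (((1:ℝ), c) : V2)) ^ 2 := by
        have h := hPQ (t • (((1:ℝ), c) : V2))
        have h1' : (t • (((1:ℝ), c) : V2)).1 = t := by simp
        have h2' : (t • (((1:ℝ), c) : V2)).2 = t * c := by simp
        rw [h1', h2'] at h
        rw [h]
        ring
      rw [hexpand]
      field_simp
      ring
    have hsq := sq_coeff_of_tendsto_sq ((haA c) 0 (Set.mem_univ _)) halim
    have h2 := hsq.2
    have hfacμ2 : ((Nat.factorial (μ + 2) : ℕ) : ℝ) ≠ 0 := by positivity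
    rw [haD c (μ + 2), mul_div_cancel_left₀ _ hfacμ2] at h2
    exact h2
  -- polynomial identity
  have hpolyid : (seriesPoly Φ (μ + 2)) ^ 2
      = (1 + Polynomial.X ^ 4) * (seriesPoly Ψ μ) ^ 2 := by
    apply Polynomial.eq_of_infinite_eval_eq
    apply Set.Infinite.mono _ hSinf
    intro c hc
    simp only [Set.mem_setOf_eq, Polynomial.eval_mul, Polynomial.eval_pow,
      Polynomial.eval_add, Polynomial.eval_one, Polynomial.eval_X]
    exact hkey c hc
  exact no_real_poly_sol _ _ hμ hpolyid


end NashAux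

open NashAux in
/-- There do not exist Nash regulous functions `ψ₁, ψ₂ : ℝ⁴ → ℝ` satisfying
`x⁴·y²·ψ₁(x,y,z,w) + (x⁴ − y⁴·(z⁴ + w⁴))·ψ₂(x,y,z,w) = x⁶` for all `(x,y,z,w) ∈ ℝ⁴`. -/
theorem no_nashRegulous_solution_dim4 :
    ¬ ∃ ψ₁ ψ₂ : (Fin 4 → ℝ) → ℝ, IsNashRegulous ψ₁ ∧ IsNashRegulous ψ₂ ∧
      ∀ x y z w : ℝ,
        x ^ 4 * y ^ 2 * ψ₁ ![x, y, z, w] +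
          (x ^ 4 - y ^ 4 * (z ^ 4 + w ^ 4)) * ψ₂ ![x, y, z, w] = x ^ 6 := by
  classical
  rintro ⟨ψ₁, ψ₂, ⟨hc1, g, h, ⟨hgA, -⟩, ⟨hhA, -⟩, hZ, hfrac⟩, -, heq⟩
  -- continuity of g and h
  have hgc : Continuous g := by
    rw [continuous_iff_continuousAt]; exact fun x => (hgA x (Set.mem_univ _)).continuousAt
  have hhc : Continuous h := by
    rw [continuous_iff_continuousAt]; exact fun x => (hhA x (Set.mem_univ _)).continuousAt
  -- Part 1 : the value of ψ₁ on the plane x = y = 0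
  have hgen : ∀ z w : ℝ, z ^ 4 + w ^ 4 ≠ 0 →
      ψ₁ ![0, 0, z, w] = Real.sqrt (z ^ 4 + w ^ 4) := by
    intro z w hne
    have hpos : 0 < z ^ 4 + w ^ 4 := lt_of_le_of_ne (by positivity) (Ne.symm hne)
    set s : ℝ := Real.sqrt (Real.sqrt (z ^ 4 + w ^ 4)) with hsdef
    have hs2 : s ^ 2 = Real.sqrt (z ^ 4 + w ^ 4) := Real.sq_sqrt (Real.sqrt_nonneg _)
    have hs4 : s ^ 4 = z ^ 4 + w ^ 4 := by
      have : s ^ 4 = (s ^ 2) ^ 2 := by ring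
      rw [this, hs2, Real.sq_sqrt hpos.le]
    have heval : ∀ t : ℝ, t ≠ 0 → ψ₁ ![t * s, t, z, w] = s ^ 2 := by
      intro t ht
      have hs0 : 0 < s := by
        rw [hsdef]
        exact Real.sqrt_pos.mpr (Real.sqrt_pos.mpr hpos)
      have h1 := heq (t * s) t z w
      have hzero : (t * s) ^ 4 - t ^ 4 * (z ^ 4 + w ^ 4) = 0 := by
        rw [← hs4]; ring
      rw [hzero, zero_mul, add_zero] at h1
      have hts : (t * s) ^ 4 * t ^ 2 ≠ 0 := by positivity
      apply mul_left_cancel₀ hts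
      rw [h1]; ring
    have hF : Continuous fun t : ℝ => (![t * s, t, z, w] : Fin 4 → ℝ) := by
      apply continuous_pi
      intro i
      fin_cases i <;> simp <;> fun_prop
    have h0 : (![0 * s, 0, z, w] : Fin 4 → ℝ) = ![0, 0, z, w] := by norm_num
    have htend1 : Tendsto (fun t : ℝ => ψ₁ ![t * s, t, z, w]) (𝓝[≠] (0:ℝ))
        (𝓝 (ψ₁ ![0, 0, z, w])) := by
      have := ((hc1.comp hF).tendsto 0).mono_left (nhdsWithin_le_nhds (s := {(0:ℝ)}ᶜ))
      simpa [h0, Function.comp_def] using this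
    have htend2 : Tendsto (fun t : ℝ => ψ₁ ![t * s, t, z, w]) (𝓝[≠] (0:ℝ)) (𝓝 (s ^ 2)) := by
      refine Tendsto.congr' ?_ tendsto_const_nhds
      filter_upwards [self_mem_nhdsWithin] with t ht
      exact (heval t ht).symm
    rw [tendsto_nhds_unique htend1 htend2, hs2]
  have hpsi : ∀ z w : ℝ, ψ₁ ![0, 0, z, w] = Real.sqrt (z ^ 4 + w ^ 4) := by
    intro z w
    rcases eq_or_ne (z ^ 4 + w ^ 4) 0 with h0 | hne
    · have hz4 : z ^ 4 = 0 ∧ w ^ 4 = 0 := by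
        constructor <;> nlinarith [sq_nonneg (z^2), sq_nonneg (w^2), sq_nonneg z, sq_nonneg w]
      have hz : z = 0 := by
        have := hz4.1; exact pow_eq_zero_iff (by norm_num) |>.mp this
      have hw : w = 0 := by
        have := hz4.2; exact pow_eq_zero_iff (by norm_num) |>.mp this
      subst hz; subst hw
      have hG : Continuous fun ζ : ℝ => (![0, 0, ζ, 0] : Fin 4 → ℝ) := by
        apply continuous_pi
        intro i
        fin_cases i <;> simp <;> fun_prop
      have htend1 : Tendsto (fun ζ : ℝ => ψ₁ ![0, 0, ζ, 0]) (𝓝[≠] (0:ℝ))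
          (𝓝 (ψ₁ ![0, 0, 0, 0])) := by
        have := ((hc1.comp hG).tendsto 0).mono_left (nhdsWithin_le_nhds (s := {(0:ℝ)}ᶜ))
        simpa [Function.comp_def] using this
      have htend2 : Tendsto (fun ζ : ℝ => ψ₁ ![0, 0, ζ, 0]) (𝓝[≠] (0:ℝ)) (𝓝 0) := by
        have hcont : Tendsto (fun ζ : ℝ => Real.sqrt (ζ ^ 4 + 0 ^ 4)) (𝓝[≠] (0:ℝ)) (𝓝 0) := by
          have hc : Continuous fun ζ : ℝ => Real.sqrt (ζ ^ 4 + 0 ^ 4) := by fun_prop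
          have := (hc.tendsto 0).mono_left (nhdsWithin_le_nhds (s := {(0:ℝ)}ᶜ))
          simpa using this
        refine hcont.congr' ?_
        filter_upwards [self_mem_nhdsWithin] with ζ hζ
        have hζ4 : ζ ^ 4 + 0 ^ 4 ≠ 0 := by
          have : (ζ:ℝ) ≠ 0 := hζ
          positivity
        exact (hgen ζ 0 hζ4).symm
      rw [tendsto_nhds_unique htend1 htend2]
      simp
    · exact hgen z w hne
  -- Part 2 : g = ψ₁ * h everywhere
  have hdense : Dense {x : Fin 4 → ℝ | h x ≠ 0} := by
    rw [IsNowhereDense] at hZ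
    have hcl : IsClosed {x : Fin 4 → ℝ | h x = 0} := isClosed_eq hhc continuous_const
    rw [hcl.closure_eq] at hZ
    have := interior_eq_empty_iff_dense_compl.mp hZ
    convert this using 1
    rfl
  have hext : g = fun v => ψ₁ v * h v := by
    apply Continuous.ext_on hdense hgc (hc1.mul hhc)
    intro v hv
    have hv' : h v ≠ 0 := hv
    show g v = ψ₁ v * h v
    rw [hfrac v hv']
    field_simp
  have hgh : ∀ v, g v = ψ₁ v * h v := fun v => congrFun hext v
  -- Part 3 : a point where h is nonzero
  obtain ⟨x₀, hx₀⟩ : ∃ x, h x ≠ 0 := by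
    obtain ⟨x, hx⟩ := hdense.nonempty
    exact ⟨x, hx⟩
  set a : ℝ := x₀ 0 with ha
  set b : ℝ := x₀ 1 with hb
  -- the embedding of the 3-space
  set ι : W3 → (Fin 4 → ℝ) := fun p => ![p.1 * a, p.1 * b, p.2.1, p.2.2] with hι
  have hιA : AnalyticOnNhd ℝ ι Set.univ := by
    rw [hι]
    apply analyticOnNhd_pi_iff.mpr
    intro i
    fin_cases i <;> simp
    · exact fun x _ => (analyticAt_fst).mul analyticAt_const
    · exact fun x _ => (analyticAt_fst).mul analyticAt_const
    · exact fun x _ => analyticAt_fst.comp analyticAt_snd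
    · exact fun x _ => analyticAt_snd.comp analyticAt_snd
  have hι0 : ∀ z w : ℝ, ι (0, z, w) = ![0, 0, z, w] := by
    intro z w
    rw [hι]
    norm_num
  have hι1 : ι (1, x₀ 2, x₀ 3) = x₀ := by
    rw [hι]
    funext i
    fin_cases i <;> simp [ha, hb]
  set Θg : W3 → ℝ := fun p => g (ι p) with hΘg
  set Θh : W3 → ℝ := fun p => h (ι p) with hΘh
  have hΘgA : AnalyticOnNhd ℝ Θg Set.univ := hgA.comp hιA (Set.mapsTo_univ _ _)
  have hΘhA : AnalyticOnNhd ℝ Θh Set.univ := hhA.comp hιA (Set.mapsTo_univ _ _)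
  -- existence of a nonvanishing coefficient
  have hex : ∃ n : ℕ, ∃ q : V2, partialT Θh n (0, q.1, q.2) ≠ 0 := by
    by_contra hall
    push_neg at hall
    have hzero : ∀ z w t : ℝ, Θh (t, z, w) = 0 := by
      intro z w
      apply zero_of_deriv_zero (fun t _ => line_analyticAt hΘhA z w t)
      intro n
      rw [iteratedDeriv_line hΘhA n z w]
      exact hall n (z, w)
    have := hzero (x₀ 2) (x₀ 3) 1
    rw [hΘh] at this
    simp only at this
    rw [hι1] at this
    exact hx₀ this
  set m : ℕ := Nat.find hex with hm
  obtain ⟨q₀, hq₀⟩ : ∃ q : V2, partialT Θh m (0, q.1, q.2) ≠ 0 := Nat.find_spec hex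
  have hmin : ∀ j < m, ∀ q : V2, partialT Θh j (0, q.1, q.2) = 0 := by
    intro j hj
    have hmin' := Nat.find_min hex (hm ▸ hj)
    push_neg at hmin'
    exact hmin'
  -- the coefficient functions on ℝ²
  set Pf : V2 → ℝ := fun q => ((Nat.factorial m : ℝ))⁻¹ * partialT Θg m (0, q.1, q.2) with hPf
  set Qf : V2 → ℝ := fun q => ((Nat.factorial m : ℝ))⁻¹ * partialT Θh m (0, q.1, q.2) with hQf
  have hemb : AnalyticOnNhd ℝ (fun q : V2 => ((0:ℝ), q.1, q.2)) Set.univ := by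
    intro x _
    apply AnalyticAt.prod analyticAt_const
    exact AnalyticAt.prod analyticAt_fst analyticAt_snd
  have hPfA : AnalyticOnNhd ℝ Pf Set.univ := by
    rw [hPf]
    exact analyticOnNhd_const.mul
      (((partialT_analytic hΘgA m)).comp hemb (Set.mapsTo_univ _ _))
  have hQfA : AnalyticOnNhd ℝ Qf Set.univ := by
    rw [hQf]
    exact analyticOnNhd_const.mul
      (((partialT_analytic hΘhA m)).comp hemb (Set.mapsTo_univ _ _))
  have hfacm : ((Nat.factorial m : ℕ) : ℝ) ≠ 0 := by positivity
  -- the key identity Pf = sqrt * Qf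
  have hkey : ∀ q : V2, Pf q = Real.sqrt (q.1 ^ 4 + q.2 ^ 4) * Qf q := by
    intro q
    have hlow : ∀ j < m, iteratedDeriv j (fun t => Θh (t, q.1, q.2)) 0 = 0 := by
      intro j hj
      rw [iteratedDeriv_line hΘhA j q.1 q.2]
      exact hmin j hj q
    have hQlim : Tendsto (fun t : ℝ => Θh (t, q.1, q.2) / t ^ m) (𝓝[≠] (0:ℝ)) (𝓝 (Qf q)) := by
      have h1 := tendsto_div_pow_of_deriv (line_analyticAt hΘhA q.1 q.2 0) hlow
      rw [iteratedDeriv_line hΘhA m q.1 q.2] at h1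
      have : partialT Θh m (0, q.1, q.2) / (Nat.factorial m : ℝ) = Qf q := by
        rw [hQf]
        field_simp
      rwa [this] at h1
    have hψlim : Tendsto (fun t : ℝ => ψ₁ (ι (t, q.1, q.2))) (𝓝[≠] (0:ℝ))
        (𝓝 (Real.sqrt (q.1 ^ 4 + q.2 ^ 4))) := by
      have hιc : Continuous ι := by
        rw [continuous_iff_continuousAt]
        exact fun x => (hιA x (Set.mem_univ _)).continuousAt
      have hpathc : Continuous fun t : ℝ => ((t, q.1, q.2) : W3) := by fun_prop
      have := ((hc1.comp (hιc.comp hpathc)).tendsto 0).mono_left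
        (nhdsWithin_le_nhds (s := {(0:ℝ)}ᶜ))
      have hval : ψ₁ (ι (0, q.1, q.2)) = Real.sqrt (q.1 ^ 4 + q.2 ^ 4) := by
        rw [hι0 q.1 q.2, hpsi q.1 q.2]
      rw [← hval]
      exact this
    have hglim : Tendsto (fun t : ℝ => Θg (t, q.1, q.2) / t ^ m) (𝓝[≠] (0:ℝ))
        (𝓝 (Real.sqrt (q.1 ^ 4 + q.2 ^ 4) * Qf q)) := by
      have h1 := hψlim.mul hQlim
      refine h1.congr ?_
      intro t
      rw [hΘg, hΘh]
      simp only
      rw [hgh (ι (t, q.1, q.2))]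
      ring
    have h2 := (coeff_of_tendsto (line_analyticAt hΘgA q.1 q.2 0) hglim).2
    rw [iteratedDeriv_line hΘgA m q.1 q.2] at h2
    rw [hPf]
    simp only
    rw [← h2]
    field_simp
  -- conclusion via stage 2
  apply stage2 hPfA hQfA
  · intro q
    rw [hkey q, mul_pow, Real.sq_sqrt (by positivity)]
  · refine ⟨q₀, ?_⟩
    rw [hQf]
    simp only
    exact mul_ne_zero (inv_ne_zero hfacm) hq₀
end
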